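/- arXiv:1401.2174 — 3 statements merged into one kernel-verified Lean document; each statement's English description precedes it below -/
import Mathlib

section
/- Let 𝔤 be a complex simple Lie algebra graded by a nonempty subset Σ of the simple roots. If dim 𝔤₋₁ = 2 (equivalently, if there are exactly two positive roots of Σ-height 1), then 𝔤 has rank 2. Equivalently: if rank 𝔤 ≥ 3, then for every nonempty subset Σ of the simple roots there are at least 3 positive roots of Σ-height 1. -/
open scoped RealInnerProductSpace BigOperators Classical

/-- A reduced crystallographic root system in a real inner product space,
together with a chosen base of simple roots and the coordinates of each
root with respect to the base. -/
structure RootSystemBase (V : Type*) [NormedAddCommGroup V] [InnerProductSpace ℝ V] where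
  /-- the set of roots -/
  Δ : Finset V
  /-- the set of simple roots (the base) -/
  Δ0 : Finset V
  base_sub : Δ0 ⊆ Δ
  ne_zero : ∀ β ∈ Δ, β ≠ (0 : V)
  indep : LinearIndependent ℝ (fun a : ↥Δ0 => (a : V))
  neg_mem : ∀ β ∈ Δ, -β ∈ Δ
  /-- `coeff β α` is the coefficient `n_α` of the simple root `α` in `β = ∑ n_α • α` -/
  coeff : V → V → ℤ
  coeff_spec : ∀ β ∈ Δ, β = ∑ α ∈ Δ0, (coeff β α : ℝ) • α
  coeff_sign : ∀ β ∈ Δ, (∀ α ∈ Δ0, 0 ≤ coeff β α) ∨ (∀ α ∈ Δ0, coeff β α ≤ 0)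
  crystal : ∀ α ∈ Δ, ∀ β ∈ Δ, ∃ k : ℤ, 2 * ⟪β, α⟫ / ⟪α, α⟫ = (k : ℝ)
  reflect_mem : ∀ α ∈ Δ, ∀ β ∈ Δ, β - (2 * ⟪β, α⟫ / ⟪α, α⟫) • α ∈ Δ
  reduced : ∀ α ∈ Δ, (2 : ℝ) • α ∉ Δ

namespace RootSystemBase

variable {V : Type*} [NormedAddCommGroup V] [InnerProductSpace ℝ V]

variable (R : RootSystemBase V)

/-- The height `ht_Σ(β)` of a root `β` relative to a subset `Sg` of the simple roots. -/
def ht (Sg : Finset V) (β : V) : ℤ := ∑ α ∈ Sg, R.coeff β α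

/-- positive roots -/
def IsPos (β : V) : Prop := β ∈ R.Δ ∧ ∀ α ∈ R.Δ0, 0 ≤ R.coeff β α

/-- negative roots -/
def IsNeg (β : V) : Prop := β ∈ R.Δ ∧ ∀ α ∈ R.Δ0, R.coeff β α ≤ 0

/-- Irreducibility of the root system (the Dynkin diagram is connected); this is
equivalent to the corresponding complex Lie algebra being simple. -/
def Irred : Prop :=
  ¬ ∃ S : Finset V, S ⊆ R.Δ0 ∧ S.Nonempty ∧ S ≠ R.Δ0 ∧
      ∀ a ∈ S, ∀ b ∈ R.Δ0, b ∉ S → ⟪a, b⟫ = 0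

/-- Adjacency of two (simple) roots in the Dynkin diagram. -/
def Adj (a b : V) : Prop := a ≠ b ∧ ⟪a, b⟫ ≠ 0

end RootSystemBase


section Proofs

variable {V : Type*} [NormedAddCommGroup V] [InnerProductSpace ℝ V] (R : RootSystemBase V)

lemma indep_sum (f : V → ℝ) (h : ∑ α ∈ R.Δ0, f α • α = 0) : ∀ α ∈ R.Δ0, f α = 0 := by
  intro α hα
  have h2 : ∑ i ∈ Finset.univ, f ((fun a : ↥R.Δ0 => (a : V)) i) • ((fun a : ↥R.Δ0 => (a : V)) i) = 0 := by
    rw [← h, ← Finset.sum_coe_sort R.Δ0 (fun a => f a • a)]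
  exact linearIndependent_iff'.mp R.indep Finset.univ (fun a => f (a : V)) h2 ⟨α, hα⟩ (Finset.mem_univ _)

lemma coeff_eq {β : V} (hβ : β ∈ R.Δ) (f : V → ℝ) (hf : β = ∑ α ∈ R.Δ0, f α • α) :
    ∀ α ∈ R.Δ0, f α = (R.coeff β α : ℝ) := by
  intro α hα
  have h0 : ∑ α ∈ R.Δ0, (f α - (R.coeff β α : ℝ)) • α = 0 := by
    simp only [sub_smul, Finset.sum_sub_distrib]
    rw [← hf, ← R.coeff_spec β hβ, sub_self]
  have := indep_sum R _ h0 α hα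
  linarith

lemma add_root {α β : V} (hα : α ∈ R.Δ) (hβ : β ∈ R.Δ) (hneg : ⟪β, α⟫ < 0) (hne : β ≠ -α) :
    β + α ∈ R.Δ := by
  have hαα : (0:ℝ) < ⟪α, α⟫ :=
    lt_of_le_of_ne real_inner_self_nonneg
      (fun h => (R.ne_zero α hα) ((inner_self_eq_zero (𝕜 := ℝ)).mp h.symm))
  have hββ : (0:ℝ) < ⟪β, β⟫ :=
    lt_of_le_of_ne real_inner_self_nonneg
      (fun h => (R.ne_zero β hβ) ((inner_self_eq_zero (𝕜 := ℝ)).mp h.symm))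
  obtain ⟨k, hk⟩ := R.crystal α hα β hβ
  obtain ⟨k', hk'⟩ := R.crystal β hβ α hα
  have hcomm : ⟪α, β⟫ = ⟪β, α⟫ := real_inner_comm β α
  have hkneg : (k:ℝ) < 0 := by rw [← hk]; exact div_neg_of_neg_of_pos (by linarith) hαα
  have hk'neg : (k':ℝ) < 0 := by rw [← hk']; exact div_neg_of_neg_of_pos (by rw [hcomm]; linarith) hββ
  by_cases hkm : k = -1
  · have hmem := R.reflect_mem α hα β hβ
    rw [hk, hkm] at hmem
    simpa using hmem
  by_cases hkm' : k' = -1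
  · have hmem := R.reflect_mem β hβ α hα
    rw [hk', hkm'] at hmem
    rw [add_comm]
    simpa using hmem
  · have hk1 : k ≤ -2 := by
      have : k < 0 := by exact_mod_cast hkneg
      omega
    have hk1' : k' ≤ -2 := by
      have : k' < 0 := by exact_mod_cast hk'neg
      omega
    have hk2 : (k:ℝ) ≤ -2 := by exact_mod_cast hk1
    have hk2' : (k':ℝ) ≤ -2 := by exact_mod_cast hk1'
    have h1 : 2 * ⟪β, α⟫ ≤ -2 * ⟪α, α⟫ := by
      have := (div_le_iff₀ hαα).mp (le_of_eq_of_le hk hk2)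
      linarith
    have h2 : 2 * ⟪α, β⟫ ≤ -2 * ⟪β, β⟫ := by
      have := (div_le_iff₀ hββ).mp (le_of_eq_of_le hk' hk2')
      linarith
    exfalso
    apply hne
    rw [← add_eq_zero_iff_eq_neg]
    rw [← inner_self_eq_zero (𝕜 := ℝ) (x := β + α)]
    have hexp : ⟪β + α, β + α⟫ = ⟪β, β⟫ + 2 * ⟪β, α⟫ + ⟪α, α⟫ := by
      rw [inner_add_add_self]; ring_nf; rw [real_inner_comm α β]; ring
    have hge : (0:ℝ) ≤ ⟪β + α, β + α⟫ := real_inner_self_nonneg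
    rw [hcomm] at h2
    linarith [hexp ▸ hge, hexp]


lemma simple_obtuse {α β : V} (hα : α ∈ R.Δ0) (hβ : β ∈ R.Δ0) (hne : α ≠ β) : ⟪α, β⟫ ≤ 0 := by
  by_contra h
  push_neg at h
  have hαΔ := R.base_sub hα
  have hβΔ := R.base_sub hβ
  have hnegβ : -β ∈ R.Δ := R.neg_mem β hβΔ
  have hneg : ⟪α, -β⟫ < 0 := by rw [inner_neg_right]; linarith
  have hne' : α ≠ -(-β) := by rwa [neg_neg]
  have hmem : α + -β ∈ R.Δ := add_root R hnegβ hαΔ hneg hne'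
  have hcoeffs := coeff_eq R hmem
      (fun δ => (if δ = α then 1 else 0) - (if δ = β then 1 else 0)) ?_
  · rcases R.coeff_sign _ hmem with hs | hs
    · have h1 := hcoeffs β hβ
      have h2 := hs β hβ
      rw [if_neg (Ne.symm hne), if_pos rfl] at h1
      have : (R.coeff (α + -β) β : ℝ) = -1 := by linarith
      have : R.coeff (α + -β) β = -1 := by exact_mod_cast this
      omega
    · have h1 := hcoeffs α hα
      have h2 := hs α hα
      rw [if_pos rfl, if_neg hne] at h1
      have : (R.coeff (α + -β) α : ℝ) = 1 := by linarith
      have : R.coeff (α + -β) α = 1 := by exact_mod_cast this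
      omega
  · simp only [sub_smul, Finset.sum_sub_distrib, ite_smul, one_smul, zero_smul]
    rw [Finset.sum_ite_eq' R.Δ0 α, Finset.sum_ite_eq' R.Δ0 β, if_pos hα, if_pos hβ]
    abel

lemma sum_inj {S₁ S₂ : Finset V} (h1 : S₁ ⊆ R.Δ0) (h2 : S₂ ⊆ R.Δ0)
    (h : ∑ α ∈ S₁, α = ∑ α ∈ S₂, α) : S₁ = S₂ := by
  have key : ∑ α ∈ R.Δ0, ((if α ∈ S₁ then (1:ℝ) else 0) - (if α ∈ S₂ then 1 else 0)) • α = 0 := by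
    simp only [sub_smul, Finset.sum_sub_distrib, ite_smul, one_smul, zero_smul]
    rw [Finset.sum_ite_mem, Finset.sum_ite_mem,
      Finset.inter_eq_right.mpr h1, Finset.inter_eq_right.mpr h2, h, sub_self]
  ext δ
  constructor
  · intro hδ
    by_contra hδ2
    have := indep_sum R _ key δ (h1 hδ)
    rw [if_pos hδ, if_neg hδ2] at this
    norm_num at this
  · intro hδ
    by_contra hδ2
    have := indep_sum R _ key δ (h2 hδ)
    rw [if_neg hδ2, if_pos hδ] at this
    norm_num at this

lemma grow (hirr : R.Irred) {S : Finset V} (hS : S ⊆ R.Δ0) (hne : S.Nonempty)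
    (hroot : (∑ α ∈ S, α) ∈ R.Δ) (hproper : S ≠ R.Δ0) :
    ∃ γ ∈ R.Δ0, γ ∉ S ∧ (∑ α ∈ insert γ S, α) ∈ R.Δ := by
  have hadj : ∃ γ ∈ R.Δ0, γ ∉ S ∧ ∃ s ∈ S, ⟪s, γ⟫ ≠ 0 := by
    by_contra h
    push_neg at h
    exact hirr ⟨S, hS, hne, hproper, fun a ha b hb hbS => h b hb hbS a ha⟩
  obtain ⟨γ, hγ0, hγS, s₀, hs₀, hadj0⟩ := hadj
  have hsum_neg : ⟪∑ α ∈ S, α, γ⟫ < 0 := by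
    rw [sum_inner]
    have hlt : ∑ s ∈ S, ⟪s, γ⟫ < ∑ s ∈ S, (0:ℝ) := by
      apply Finset.sum_lt_sum
      · intro i hi
        exact simple_obtuse R (hS hi) hγ0 (fun he => hγS (he ▸ hi))
      · exact ⟨s₀, hs₀, lt_of_le_of_ne
          (simple_obtuse R (hS hs₀) hγ0 (fun he => hγS (he ▸ hs₀))) hadj0⟩
    simpa using hlt
  have hne' : (∑ α ∈ S, α) ≠ -γ := by
    intro h
    have key : ∑ α ∈ R.Δ0, ((if α ∈ S then (1:ℝ) else 0) + (if α = γ then 1 else 0)) • α = 0 := by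
      simp only [add_smul, Finset.sum_add_distrib, ite_smul, one_smul, zero_smul]
      rw [Finset.sum_ite_mem, Finset.inter_eq_right.mpr hS,
        Finset.sum_ite_eq' R.Δ0 γ, if_pos hγ0, h]
      abel
    have := indep_sum R _ key s₀ (hS hs₀)
    rw [if_pos hs₀, if_neg (fun he : s₀ = γ => hγS (he ▸ hs₀))] at this
    norm_num at this
  have hmem := add_root R (R.base_sub hγ0) hroot hsum_neg hne'
  refine ⟨γ, hγ0, hγS, ?_⟩
  rw [Finset.sum_insert hγS, add_comm]
  exact hmem


lemma good_coeff {S : Finset V} (hS : S ⊆ R.Δ0) (hroot : (∑ α ∈ S, α) ∈ R.Δ) :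
    ∀ δ ∈ R.Δ0, R.coeff (∑ α ∈ S, α) δ = if δ ∈ S then 1 else 0 := by
  have h := coeff_eq R hroot (fun δ => if δ ∈ S then (1:ℝ) else 0) ?_
  · intro δ hδ
    have := (h δ hδ).symm
    split at this <;> split <;> first | exact_mod_cast this | simp_all
  · simp only [ite_smul, one_smul, zero_smul]
    rw [Finset.sum_ite_mem, Finset.inter_eq_right.mpr hS]

lemma good_mem_filter {S Sg : Finset V} (hS : S ⊆ R.Δ0) (hroot : (∑ α ∈ S, α) ∈ R.Δ)
    (hSg : Sg ⊆ R.Δ0) (hcard : (Sg ∩ S).card = 1) :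
    (∑ α ∈ S, α) ∈ R.Δ.filter (fun β => R.IsPos β ∧ R.ht Sg β = 1) := by
  have hco := good_coeff R hS hroot
  rw [Finset.mem_filter]
  refine ⟨hroot, ⟨hroot, ?_⟩, ?_⟩
  · intro δ hδ
    rw [hco δ hδ]
    split <;> norm_num
  · unfold RootSystemBase.ht
    rw [Finset.sum_congr rfl (fun δ hδ => hco δ (hSg hδ)), Finset.sum_ite_mem,
      Finset.sum_const, hcard]
    simp

lemma hit (hirr : R.Irred) {Sg : Finset V} (hSg : Sg ⊆ R.Δ0) (hSgne : Sg.Nonempty) :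
    ∀ n : ℕ, ∀ S : Finset V, (R.Δ0 \ S).card = n → S ⊆ R.Δ0 → S.Nonempty →
      (∑ α ∈ S, α) ∈ R.Δ → S ∩ Sg = ∅ →
      ∃ S' : Finset V, S ⊆ S' ∧ S' ⊆ R.Δ0 ∧ (∑ α ∈ S', α) ∈ R.Δ ∧ (Sg ∩ S').card = 1 := by
  intro n
  induction n using Nat.strong_induction_on with
  | _ n ih =>
    intro S hn hS hne hroot hdisj
    have hproper : S ≠ R.Δ0 := by
      intro h
      obtain ⟨a, ha⟩ := hSgne
      have : a ∈ S ∩ Sg := Finset.mem_inter.mpr ⟨h ▸ hSg ha, ha⟩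
      simp [hdisj] at this
    obtain ⟨γ, hγ0, hγS, hroot'⟩ := grow R hirr hS hne hroot hproper
    by_cases hγSg : γ ∈ Sg
    · refine ⟨insert γ S, Finset.subset_insert γ S, Finset.insert_subset hγ0 hS, hroot', ?_⟩
      have : Sg ∩ insert γ S = {γ} := by
        ext x
        simp only [Finset.mem_inter, Finset.mem_insert, Finset.mem_singleton]
        constructor
        · rintro ⟨hx1, hx2 | hx2⟩
          · exact hx2
          · exfalso
            have : x ∈ S ∩ Sg := Finset.mem_inter.mpr ⟨hx2, hx1⟩
            simp [hdisj] at this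
        · rintro rfl
          exact ⟨hγSg, Or.inl rfl⟩
      rw [this, Finset.card_singleton]
    · have hlt : (R.Δ0 \ insert γ S).card < n := by
        rw [← hn]
        apply Finset.card_lt_card
        constructor
        · intro x hx
          rw [Finset.mem_sdiff] at *
          exact ⟨hx.1, fun h => hx.2 (Finset.mem_insert_of_mem h)⟩
        · intro hsub
          have : γ ∈ R.Δ0 \ S := Finset.mem_sdiff.mpr ⟨hγ0, hγS⟩
          have := hsub this
          rw [Finset.mem_sdiff] at this
          exact this.2 (Finset.mem_insert_self γ S)
      have hdisj' : insert γ S ∩ Sg = ∅ := by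
        ext x
        simp only [Finset.mem_inter, Finset.mem_insert, Finset.notMem_empty, iff_false]
        rintro ⟨hx1 | hx1, hx2⟩
        · exact hγSg (hx1 ▸ hx2)
        · have : x ∈ S ∩ Sg := Finset.mem_inter.mpr ⟨hx1, hx2⟩
          simp [hdisj] at this
      obtain ⟨S', hsub, h1, h2, h3⟩ := ih _ hlt (insert γ S) rfl
        (Finset.insert_subset hγ0 hS) (Finset.insert_nonempty γ S) hroot' hdisj'
      exact ⟨S', (Finset.subset_insert γ S).trans hsub, h1, h2, h3⟩


lemma three_sets (hirr : R.Irred) (hrank : 3 ≤ R.Δ0.card)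
    {Sg : Finset V} (hSg : Sg ⊆ R.Δ0) (hSgne : Sg.Nonempty) :
    ∃ S₁ S₂ S₃ : Finset V, S₁ ≠ S₂ ∧ S₁ ≠ S₃ ∧ S₂ ≠ S₃ ∧
      (S₁ ⊆ R.Δ0 ∧ (∑ α ∈ S₁, α) ∈ R.Δ ∧ (Sg ∩ S₁).card = 1) ∧
      (S₂ ⊆ R.Δ0 ∧ (∑ α ∈ S₂, α) ∈ R.Δ ∧ (Sg ∩ S₂).card = 1) ∧
      (S₃ ⊆ R.Δ0 ∧ (∑ α ∈ S₃, α) ∈ R.Δ ∧ (Sg ∩ S₃).card = 1) := by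
  have hsingle : ∀ a ∈ Sg, {a} ⊆ R.Δ0 ∧ (∑ α ∈ ({a} : Finset V), α) ∈ R.Δ ∧
      (Sg ∩ ({a} : Finset V)).card = 1 := by
    intro a ha
    refine ⟨Finset.singleton_subset_iff.mpr (hSg ha), ?_, ?_⟩
    · rw [Finset.sum_singleton]; exact R.base_sub (hSg ha)
    · rw [Finset.inter_singleton_of_mem ha, Finset.card_singleton]
  rcases lt_or_ge Sg.card 3 with hc | hc
  · interval_cases hcard : Sg.card
    · exact absurd (Finset.card_eq_zero.mp hcard ▸ hSgne) (by simp)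
    · -- Sg = {a}
      obtain ⟨a, ha⟩ := Finset.card_eq_one.mp hcard
      have haΔ0 : a ∈ R.Δ0 := hSg (ha ▸ Finset.mem_singleton_self a)
      have h1 : ({a} : Finset V) ⊆ R.Δ0 := Finset.singleton_subset_iff.mpr haΔ0
      have hr1 : (∑ α ∈ ({a} : Finset V), α) ∈ R.Δ := by
        rw [Finset.sum_singleton]; exact R.base_sub haΔ0
      have hp1 : ({a} : Finset V) ≠ R.Δ0 := by
        intro h; rw [← h] at hrank; simp at hrank
      obtain ⟨γ₁, hγ₁0, hγ₁S, hr2⟩ := grow R hirr h1 ⟨a, Finset.mem_singleton_self a⟩ hr1 hp1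
      set S₂ := insert γ₁ ({a} : Finset V) with hS₂
      have h2 : S₂ ⊆ R.Δ0 := Finset.insert_subset hγ₁0 h1
      have hc2 : S₂.card = 2 := by rw [hS₂, Finset.card_insert_of_notMem hγ₁S]; simp
      have hp2 : S₂ ≠ R.Δ0 := by intro h; rw [← h, hc2] at hrank; omega
      obtain ⟨γ₂, hγ₂0, hγ₂S, hr3⟩ := grow R hirr h2 ⟨a, by simp [hS₂]⟩ hr2 hp2
      set S₃ := insert γ₂ S₂ with hS₃
      have h3 : S₃ ⊆ R.Δ0 := Finset.insert_subset hγ₂0 h2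
      have hc3 : S₃.card = 3 := by rw [hS₃, Finset.card_insert_of_notMem hγ₂S, hc2]
      have hsub2 : Sg ⊆ S₂ := by rw [ha, hS₂]; intro x hx; simp at hx; simp [hx]
      have hsub3 : Sg ⊆ S₃ := hsub2.trans (Finset.subset_insert _ _)
      refine ⟨{a}, S₂, S₃, ?_, ?_, ?_, hsingle a (ha ▸ Finset.mem_singleton_self a), ?_, ?_⟩
      · intro h; rw [← h] at hc2; simp at hc2
      · intro h; rw [← h] at hc3; simp at hc3
      · intro h; rw [h, hc3] at hc2; omega
      · exact ⟨h2, hr2, by rw [Finset.inter_eq_left.mpr hsub2, hcard]⟩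
      · exact ⟨h3, hr3, by rw [Finset.inter_eq_left.mpr hsub3, hcard]⟩
    · -- Sg = {a, b}
      obtain ⟨a, b, hab, hab2⟩ := Finset.card_eq_two.mp hcard
      have ha : a ∈ Sg := by rw [hab2]; simp
      have hb : b ∈ Sg := by rw [hab2]; simp
      have hex : (R.Δ0 \ Sg).Nonempty := by
        rw [← Finset.card_pos, Finset.card_sdiff_of_subset hSg]
        omega
      obtain ⟨γ, hγ⟩ := hex
      rw [Finset.mem_sdiff] at hγ
      have hdisj : ({γ} : Finset V) ∩ Sg = ∅ := Finset.singleton_inter_of_notMem hγ.2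
      obtain ⟨S', hsub, hS'0, hS'r, hS'c⟩ := hit R hirr hSg hSgne _ ({γ} : Finset V) rfl
        (Finset.singleton_subset_iff.mpr hγ.1) ⟨γ, Finset.mem_singleton_self γ⟩
        (by rw [Finset.sum_singleton]; exact R.base_sub hγ.1) hdisj
      have hγS' : γ ∈ S' := hsub (Finset.mem_singleton_self γ)
      refine ⟨{a}, {b}, S', ?_, ?_, ?_, hsingle a ha, hsingle b hb, hS'0, hS'r, hS'c⟩
      · simp [hab]
      · intro h
        rw [← h] at hγS'
        exact hγ.2 ((Finset.mem_singleton.mp hγS') ▸ ha)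
      · intro h
        rw [← h] at hγS'
        exact hγ.2 ((Finset.mem_singleton.mp hγS') ▸ hb)
  · -- |Sg| ≥ 3
    obtain ⟨T, hT, hTc⟩ := Finset.exists_subset_card_eq hc
    obtain ⟨a, b, c, hab, hac, hbc, hTeq⟩ := Finset.card_eq_three.mp hTc
    have ha : a ∈ Sg := hT (by rw [hTeq]; simp)
    have hb : b ∈ Sg := hT (by rw [hTeq]; simp)
    have hc' : c ∈ Sg := hT (by rw [hTeq]; simp)
    exact ⟨{a}, {b}, {c}, by simp [hab], by simp [hac], by simp [hbc],
      hsingle a ha, hsingle b hb, hsingle c hc'⟩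

lemma main2 (hirr : R.Irred) (hrank : 3 ≤ R.Δ0.card) (Sg : Finset V)
    (hSg : Sg ⊆ R.Δ0) (hSgne : Sg.Nonempty) :
    3 ≤ (R.Δ.filter (fun β => R.IsPos β ∧ R.ht Sg β = 1)).card := by
  obtain ⟨S₁, S₂, S₃, h12, h13, h23, ⟨hs1, hr1, hc1⟩, ⟨hs2, hr2, hc2⟩, ⟨hs3, hr3, hc3⟩⟩ :=
    three_sets R hirr hrank hSg hSgne
  have hm1 := good_mem_filter R hs1 hr1 hSg hc1
  have hm2 := good_mem_filter R hs2 hr2 hSg hc2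
  have hm3 := good_mem_filter R hs3 hr3 hSg hc3
  have hne12 : (∑ α ∈ S₁, α) ≠ ∑ α ∈ S₂, α := fun h => h12 (sum_inj R hs1 hs2 h)
  have hne13 : (∑ α ∈ S₁, α) ≠ ∑ α ∈ S₃, α := fun h => h13 (sum_inj R hs1 hs3 h)
  have hne23 : (∑ α ∈ S₂, α) ≠ ∑ α ∈ S₃, α := fun h => h23 (sum_inj R hs2 hs3 h)
  have hsub : ({∑ α ∈ S₁, α, ∑ α ∈ S₂, α, ∑ α ∈ S₃, α} : Finset V) ⊆
      R.Δ.filter (fun β => R.IsPos β ∧ R.ht Sg β = 1) := by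
    intro x hx
    simp only [Finset.mem_insert, Finset.mem_singleton] at hx
    rcases hx with rfl | rfl | rfl <;> assumption
  have : ({∑ α ∈ S₁, α, ∑ α ∈ S₂, α, ∑ α ∈ S₃, α} : Finset V).card = 3 := by
    rw [Finset.card_insert_of_notMem (by simp [hne12, hne13]),
      Finset.card_insert_of_notMem (by simp [hne23]), Finset.card_singleton]
  calc 3 = _ := this.symm
    _ ≤ _ := Finset.card_le_card hsub

end Proofs

/-- For the grading of a complex simple Lie algebra determined by a
nonempty subset `Sg` of the simple roots, `dim 𝔤₋₁` equals the number of positive roots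
of `Sg`-height `1`.  If this number is `2` then the rank is `2`; equivalently, if the
rank is at least `3`, then for every nonempty subset `Sg` of the simple roots there are
at least `3` positive roots of `Sg`-height `1`. -/
theorem statement0 {V : Type*} [NormedAddCommGroup V] [InnerProductSpace ℝ V]
    (R : RootSystemBase V) (hirr : R.Irred) :
    (∀ Sg : Finset V, Sg ⊆ R.Δ0 → Sg.Nonempty →
        (R.Δ.filter (fun β => R.IsPos β ∧ R.ht Sg β = 1)).card = 2 → R.Δ0.card = 2) ∧
    (3 ≤ R.Δ0.card → ∀ Sg : Finset V, Sg ⊆ R.Δ0 → Sg.Nonempty →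
        3 ≤ (R.Δ.filter (fun β => R.IsPos β ∧ R.ht Sg β = 1)).card) := by
  refine ⟨?_, fun h Sg hSg hne => main2 R hirr h Sg hSg hne⟩
  intro Sg hSg hne hcard
  by_contra hrank
  rcases lt_or_ge R.Δ0.card 3 with hc | hc
  · interval_cases hr : R.Δ0.card
    · obtain ⟨a, ha⟩ := hne
      rw [Finset.card_eq_zero.mp hr] at hSg
      exact absurd (hSg ha) (Finset.notMem_empty a)
    · -- rank 1
      obtain ⟨α, hα⟩ := Finset.card_eq_one.mp hr
      have hSgeq : Sg = {α} := by
        rcases Finset.subset_singleton_iff.mp (hα ▸ hSg) with h | h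
        · exact absurd h (Finset.nonempty_iff_ne_empty.mp hne)
        · exact h
      have hsub : R.Δ.filter (fun β => R.IsPos β ∧ R.ht Sg β = 1) ⊆ {α} := by
        intro β hβ
        rw [Finset.mem_filter] at hβ
        obtain ⟨hβΔ, _, hht⟩ := hβ
        have hht' : R.coeff β α = 1 := by
          unfold RootSystemBase.ht at hht
          rw [hSgeq, Finset.sum_singleton] at hht
          exact hht
        have := R.coeff_spec β hβΔ
        rw [hα, Finset.sum_singleton, hht'] at this
        simp only [Int.cast_one, one_smul] at this
        rw [Finset.mem_singleton, this]
      have := Finset.card_le_card hsub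
      rw [hcard, Finset.card_singleton] at this
      omega
    · exact hrank rfl
  · have := main2 R hirr hc Sg hSg hne
    omega
end

section
/- Let 𝔤 be a complex semisimple Lie algebra whose grading determined by a nonempty subset Σ of the simple roots is of Monge type, with dim 𝔤₋₁ > 2, and let 𝔶 ⊆ 𝔤₋₁ be a nonzero abelian subalgebra of codimension 1 with dim 𝔤₋₂ = dim 𝔶. Then 𝔶 is invariant under the adjoint action of 𝔤₀ on 𝔤₋₁, and there exists a 1-dimensional 𝔤₀-invariant subspace 𝔵 ⊆ 𝔤₋₁ such that 𝔤₋₁ = 𝔵 ⊕ 𝔶. -/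
open scoped RealInnerProductSpace BigOperators Classical

namespace RootSystemBase

variable {V : Type*} [NormedAddCommGroup V] [InnerProductSpace ℝ V]
variable (R : RootSystemBase V)

lemma coeff_unique {f g : V → ℝ} (h : ∑ a ∈ R.Δ0, f a • a = ∑ a ∈ R.Δ0, g a • a) :
    ∀ a ∈ R.Δ0, f a = g a := by
  have hind := Fintype.linearIndependent_iff.mp R.indep (fun a => f a - g a)
  have hsum : ∑ a : ↥R.Δ0, (f a - g a) • (a : V) = 0 := by
    rw [Finset.sum_coe_sort R.Δ0 (fun a => (f a - g a) • a)]
    simp [sub_smul, Finset.sum_sub_distrib, h]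
  intro a ha
  have := hind hsum ⟨a, ha⟩
  have : f a - g a = 0 := this
  linarith

lemma coeff_eq_of_repr {β : V} (hβ : β ∈ R.Δ) {f : V → ℝ}
    (h : β = ∑ a ∈ R.Δ0, f a • a) : ∀ a ∈ R.Δ0, (R.coeff β a : ℝ) = f a :=
  R.coeff_unique ((R.coeff_spec β hβ).symm.trans h)

lemma coeff_simple {a b : V} (ha : a ∈ R.Δ0) (hb : b ∈ R.Δ0) :
    R.coeff a b = if b = a then 1 else 0 := by
  have hrepr : a = ∑ b ∈ R.Δ0, (if b = a then (1:ℝ) else 0) • b := by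
    simp [ite_smul, Finset.sum_ite_eq', ha]
  have h := R.coeff_eq_of_repr (R.base_sub ha) hrepr b hb
  have h2 : ((R.coeff a b : ℤ) : ℝ) = ((if b = a then 1 else 0 : ℤ) : ℝ) := by
    rw [h]; split <;> simp
  exact_mod_cast h2

lemma coeff_add {β γ : V} (hβ : β ∈ R.Δ) (hγ : γ ∈ R.Δ) (hβγ : β + γ ∈ R.Δ) :
    ∀ a ∈ R.Δ0, R.coeff (β + γ) a = R.coeff β a + R.coeff γ a := by
  intro a ha
  have hrepr : β + γ = ∑ a ∈ R.Δ0, ((R.coeff β a : ℝ) + (R.coeff γ a : ℝ)) • a := by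
    simp only [add_smul, Finset.sum_add_distrib]
    rw [← R.coeff_spec β hβ, ← R.coeff_spec γ hγ]
  have h := R.coeff_eq_of_repr hβγ hrepr a ha
  exact_mod_cast h

lemma coeff_neg {β : V} (hβ : β ∈ R.Δ) :
    ∀ a ∈ R.Δ0, R.coeff (-β) a = -R.coeff β a := by
  intro a ha
  have hrepr : -β = ∑ a ∈ R.Δ0, (-(R.coeff β a : ℝ)) • a := by
    simp only [neg_smul, Finset.sum_neg_distrib]
    rw [← R.coeff_spec β hβ]
  have h := R.coeff_eq_of_repr (R.neg_mem β hβ) hrepr a ha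
  exact_mod_cast h

variable {Sg : Finset V}

lemma ht_add (hSg : Sg ⊆ R.Δ0) {β γ : V} (hβ : β ∈ R.Δ) (hγ : γ ∈ R.Δ)
    (hβγ : β + γ ∈ R.Δ) : R.ht Sg (β + γ) = R.ht Sg β + R.ht Sg γ := by
  unfold ht
  rw [← Finset.sum_add_distrib]
  exact Finset.sum_congr rfl fun a ha => R.coeff_add hβ hγ hβγ a (hSg ha)

lemma ht_neg (hSg : Sg ⊆ R.Δ0) {β : V} (hβ : β ∈ R.Δ) :
    R.ht Sg (-β) = -R.ht Sg β := by
  unfold ht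
  rw [← Finset.sum_neg_distrib]
  exact Finset.sum_congr rfl fun a ha => R.coeff_neg hβ a (hSg ha)

lemma ht_simple (hSg : Sg ⊆ R.Δ0) {a : V} (ha : a ∈ R.Δ0) :
    R.ht Sg a = if a ∈ Sg then 1 else 0 := by
  unfold ht
  rw [Finset.sum_congr rfl fun b hb => R.coeff_simple ha (hSg hb)]
  simp [Finset.sum_ite_eq']

lemma inner_self_pos' {β : V} (hβ : β ∈ R.Δ) : 0 < ⟪β, β⟫ := by
  rw [real_inner_self_eq_norm_sq]
  have h : 0 < ‖β‖ := norm_pos_iff.mpr (R.ne_zero β hβ)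
  positivity

lemma sub_mem_of_inner_pos {δ α : V} (hδ : δ ∈ R.Δ) (hα : α ∈ R.Δ) (hne : δ ≠ α)
    (hpos : 0 < ⟪δ, α⟫) : δ - α ∈ R.Δ := by
  obtain ⟨k1, hk1⟩ := R.crystal α hα δ hδ
  obtain ⟨k2, hk2⟩ := R.crystal δ hδ α hα
  have hαα := R.inner_self_pos' hα
  have hδδ := R.inner_self_pos' hδ
  have hcomm : ⟪α, δ⟫ = ⟪δ, α⟫ := real_inner_comm _ _
  have hk1pos : (0:ℤ) < k1 := by
    have h : (0:ℝ) < (k1 : ℝ) := by rw [← hk1]; positivity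
    exact_mod_cast h
  have hk2pos : (0:ℤ) < k2 := by
    have h : (0:ℝ) < (k2 : ℝ) := by rw [← hk2, hcomm]; positivity
    exact_mod_cast h
  by_cases h1 : k1 = 1
  · have h := R.reflect_mem α hα δ hδ
    rw [hk1, h1] at h
    simpa using h
  by_cases h2 : k2 = 1
  · have h := R.reflect_mem δ hδ α hα
    rw [hk2, h2] at h
    have h' := R.neg_mem _ h
    simpa [neg_sub] using h'
  exfalso
  have hcs := real_inner_mul_inner_self_le δ α
  have hprod : (k1 : ℝ) * (k2 : ℝ) ≤ 4 := by
    rw [← hk1, ← hk2, hcomm, div_mul_div_comm, div_le_iff₀ (by positivity)]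
    nlinarith [hcs]
  have hprod' : k1 * k2 ≤ 4 := by exact_mod_cast hprod
  have h12 : 2 ≤ k1 := by omega
  have h22 : 2 ≤ k2 := by omega
  have hk1two : k1 = 2 := by nlinarith
  have hk2two : k2 = 2 := by nlinarith
  rw [hk1two] at hk1
  rw [hk2two] at hk2
  have e1 : 2 * ⟪δ, α⟫ = 2 * ⟪α, α⟫ := by
    field_simp at hk1
    push_cast at hk1
    linarith
  have e2 : 2 * ⟪α, δ⟫ = 2 * ⟪δ, δ⟫ := by
    field_simp at hk2
    push_cast at hk2
    linarith
  have hz : ⟪δ - α, δ - α⟫ = 0 := by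
    rw [inner_sub_sub_self]
    linarith
  rw [real_inner_self_eq_norm_sq] at hz
  have hz2 : ‖δ - α‖ = 0 := by
    have := norm_nonneg (δ - α)
    nlinarith
  exact hne (sub_eq_zero.mp (norm_eq_zero.mp hz2))

lemma add_mem_of_inner_neg {δ α : V} (hδ : δ ∈ R.Δ) (hα : α ∈ R.Δ) (hne : δ ≠ -α)
    (hneg : ⟪δ, α⟫ < 0) : δ + α ∈ R.Δ := by
  have h := R.sub_mem_of_inner_pos hδ (R.neg_mem α hα) hne
    (by rw [inner_neg_right]; linarith)
  simpa [sub_neg_eq_add] using h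

lemma ht_two_decomp (hSg : Sg ⊆ R.Δ0) :
    ∀ δ ∈ R.Δ, R.ht Sg δ = 2 → ∃ β ∈ R.Δ, ∃ γ ∈ R.Δ,
      R.ht Sg β = 1 ∧ R.ht Sg γ = 1 ∧ β + γ = δ := by
  suffices H : ∀ n : ℕ, ∀ δ ∈ R.Δ, R.ht Sg δ = 2 →
      (∑ a ∈ R.Δ0, R.coeff δ a).toNat = n → ∃ β ∈ R.Δ, ∃ γ ∈ R.Δ,
      R.ht Sg β = 1 ∧ R.ht Sg γ = 1 ∧ β + γ = δ by
    intro δ hδ h2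
    exact H _ δ hδ h2 rfl
  intro n
  induction n using Nat.strong_induction_on with
  | _ n IH =>
  intro δ hδ h2 hm
  -- all coefficients of δ are nonnegative
  have hpos : ∀ a ∈ R.Δ0, 0 ≤ R.coeff δ a := by
    rcases R.coeff_sign δ hδ with h | h
    · exact h
    · exfalso
      have hle : R.ht Sg δ ≤ 0 :=
        Finset.sum_nonpos (fun a ha => h a (hSg ha))
      omega
  -- find a simple root with positive coefficient and positive inner product
  have hδδ := R.inner_self_pos' hδ
  have hinner : ⟪δ, δ⟫ = ∑ a ∈ R.Δ0, (R.coeff δ a : ℝ) * ⟪a, δ⟫ := by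
    have h0 := R.coeff_spec δ hδ
    calc ⟪δ, δ⟫ = ⟪(∑ α ∈ R.Δ0, (R.coeff δ α : ℝ) • α : V), δ⟫ := by rw [← h0]
    _ = ∑ a ∈ R.Δ0, ⟪((R.coeff δ a : ℝ) • a : V), δ⟫ := by rw [sum_inner]
    _ = ∑ a ∈ R.Δ0, (R.coeff δ a : ℝ) * ⟪a, δ⟫ :=
        Finset.sum_congr rfl fun a _ => real_inner_smul_left _ _ _
  have hex : ∃ a ∈ R.Δ0, 0 < (R.coeff δ a : ℝ) * ⟪a, δ⟫ := by
    by_contra hcon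
    push_neg at hcon
    have : ⟪δ, δ⟫ ≤ 0 := by
      rw [hinner]
      exact Finset.sum_nonpos hcon
    linarith
  obtain ⟨a, haΔ0, hprod⟩ := hex
  have hca : 0 < R.coeff δ a := by
    by_contra hc
    push_neg at hc
    have h1 : R.coeff δ a = 0 := le_antisymm hc (hpos a haΔ0)
    rw [h1] at hprod
    simp at hprod
  have hia : 0 < ⟪a, δ⟫ := by
    by_contra hc
    push_neg at hc
    have h0 : (0:ℝ) ≤ (R.coeff δ a : ℝ) := by exact_mod_cast (hpos a haΔ0)
    nlinarith
  have haΔ : a ∈ R.Δ := R.base_sub haΔ0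
  have hta : R.ht Sg a = if a ∈ Sg then 1 else 0 := R.ht_simple hSg haΔ0
  have hδa : δ - a ∈ R.Δ := by
    refine R.sub_mem_of_inner_pos hδ haΔ ?_ ?_
    · intro heq
      rw [heq] at h2
      rw [hta] at h2
      split at h2 <;> omega
    · rw [real_inner_comm]; exact hia
  have hsum_eq : (δ - a) + a = δ := sub_add_cancel δ a
  have hhts : R.ht Sg δ = R.ht Sg (δ - a) + R.ht Sg a := by
    conv_lhs => rw [← hsum_eq]
    exact R.ht_add hSg hδa haΔ (by rw [hsum_eq]; exact hδ)
  by_cases haSg : a ∈ Sg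
  · refine ⟨δ - a, hδa, a, haΔ, ?_, ?_, hsum_eq⟩
    · rw [hta] at hhts; rw [if_pos haSg] at hhts; omega
    · rw [hta, if_pos haSg]
  · -- a ∉ Sg: recurse on δ - a
    have hht' : R.ht Sg (δ - a) = 2 := by
      rw [hta, if_neg haSg] at hhts; omega
    have hcoeffs : ∀ b ∈ R.Δ0, R.coeff δ b = R.coeff (δ - a) b + R.coeff a b := by
      intro b hb
      have := R.coeff_add hδa haΔ (by rw [hsum_eq]; exact hδ) b hb
      rw [hsum_eq] at this
      exact this
    have hsumc : ∑ b ∈ R.Δ0, R.coeff δ b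
        = (∑ b ∈ R.Δ0, R.coeff (δ - a) b) + 1 := by
      rw [Finset.sum_congr rfl hcoeffs, Finset.sum_add_distrib]
      congr 1
      rw [Finset.sum_congr rfl (fun b hb => R.coeff_simple haΔ0 hb)]
      simp [Finset.sum_ite_eq', haΔ0]
    have htot : 2 ≤ ∑ b ∈ R.Δ0, R.coeff δ b := by
      have hsub : R.ht Sg δ ≤ ∑ b ∈ R.Δ0, R.coeff δ b :=
        Finset.sum_le_sum_of_subset_of_nonneg hSg (fun b hb _ => hpos b hb)
      omega
    have hδapos : ∀ b ∈ R.Δ0, 0 ≤ R.coeff (δ - a) b := by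
      rcases R.coeff_sign _ hδa with h | h
      · exact h
      · exfalso
        have hle : R.ht Sg (δ - a) ≤ 0 :=
          Finset.sum_nonpos (fun b hb => h b (hSg hb))
        omega
    have hmlt : (∑ b ∈ R.Δ0, R.coeff (δ - a) b).toNat < n := by omega
    obtain ⟨β, hβ, γ, hγ, hb1, hg1, hbg⟩ := IH _ hmlt (δ - a) hδa hht' rfl
    -- case analysis
    by_cases hb : 0 < ⟪δ, β⟫
    · have hδβ : δ - β ∈ R.Δ := by
        refine R.sub_mem_of_inner_pos hδ hβ ?_ hb
        intro heq; rw [heq] at h2; omega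
      refine ⟨β, hβ, δ - β, hδβ, hb1, ?_, add_sub_cancel β δ⟩
      have : R.ht Sg δ = R.ht Sg (δ - β) + R.ht Sg β := by
        conv_lhs => rw [← sub_add_cancel δ β]
        exact R.ht_add hSg hδβ hβ (by rw [sub_add_cancel]; exact hδ)
      omega
    by_cases hc : 0 < ⟪δ, γ⟫
    · have hδγ : δ - γ ∈ R.Δ := by
        refine R.sub_mem_of_inner_pos hδ hγ ?_ hc
        intro heq; rw [heq] at h2; omega
      refine ⟨δ - γ, hδγ, γ, hγ, ?_, hg1, sub_add_cancel δ γ⟩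
      have : R.ht Sg δ = R.ht Sg (δ - γ) + R.ht Sg γ := by
        conv_lhs => rw [← sub_add_cancel δ γ]
        exact R.ht_add hSg hδγ hγ (by rw [sub_add_cancel]; exact hδ)
      omega
    by_cases hba : ⟪β, a⟫ < 0
    · have hnea : β ≠ -a := by
        intro heq
        have hna : R.ht Sg (-a) = 0 := by
          rw [R.ht_neg hSg haΔ, hta, if_neg haSg]; omega
        rw [heq] at hb1; omega
      have hβa : β + a ∈ R.Δ := R.add_mem_of_inner_neg hβ haΔ hnea hba
      refine ⟨β + a, hβa, γ, hγ, ?_, hg1, ?_⟩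
      · rw [R.ht_add hSg hβ haΔ hβa, hta, if_neg haSg]; omega
      · rw [add_assoc, add_comm a γ, ← add_assoc, hbg]; abel
    by_cases hga : ⟪γ, a⟫ < 0
    · have hnea : γ ≠ -a := by
        intro heq
        have hna : R.ht Sg (-a) = 0 := by
          rw [R.ht_neg hSg haΔ, hta, if_neg haSg]; omega
        rw [heq] at hg1; omega
      have hγa : γ + a ∈ R.Δ := R.add_mem_of_inner_neg hγ haΔ hnea hga
      refine ⟨β, hβ, γ + a, hγa, hb1, ?_, ?_⟩
      · rw [R.ht_add hSg hγ haΔ hγa, hta, if_neg haSg]; omega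
      · rw [← add_assoc, hbg]; abel
    -- final contradiction
    exfalso
    push_neg at hb hc hba hga
    have hδeq : δ = a + β + γ := by
      have : β + γ = δ - a := hbg ▸ rfl
      rw [add_assoc, hbg]; abel
    have hbexp : ⟪δ, β⟫ = ⟪a, β⟫ + ⟪β, β⟫ + ⟪γ, β⟫ := by
      rw [hδeq, inner_add_left, inner_add_left]
    have hcexp : ⟪δ, γ⟫ = ⟪a, γ⟫ + ⟪β, γ⟫ + ⟪γ, γ⟫ := by
      rw [hδeq, inner_add_left, inner_add_left]
    have hppos := R.inner_self_pos' hβ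
    have hqpos := R.inner_self_pos' hγ
    have hbgpos : 0 < ⟪β + γ, β + γ⟫ := by
      rw [hbg]; exact R.inner_self_pos' hδa
    have hexp2 : ⟪β + γ, β + γ⟫
        = ⟪β, β⟫ + ⟪β, γ⟫ + ⟪γ, β⟫ + ⟪γ, γ⟫ := by
      rw [inner_add_left, inner_add_right, inner_add_right]; ring
    have hsym : ⟪γ, β⟫ = ⟪β, γ⟫ := real_inner_comm _ _
    have hab : ⟪a, β⟫ = ⟪β, a⟫ := real_inner_comm _ _
    have hag : ⟪a, γ⟫ = ⟪γ, a⟫ := real_inner_comm _ _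
    linarith

lemma ht_neg_two_decomp (hSg : Sg ⊆ R.Δ0) {δ : V} (hδ : δ ∈ R.Δ)
    (h2 : R.ht Sg δ = -2) : ∃ β ∈ R.Δ, ∃ γ ∈ R.Δ,
      R.ht Sg β = -1 ∧ R.ht Sg γ = -1 ∧ β + γ = δ := by
  have hnδ : -δ ∈ R.Δ := R.neg_mem δ hδ
  have hht : R.ht Sg (-δ) = 2 := by rw [R.ht_neg hSg hδ]; omega
  obtain ⟨β, hβ, γ, hγ, hb1, hg1, hbg⟩ := R.ht_two_decomp hSg (-δ) hnδ hht
  refine ⟨-β, R.neg_mem β hβ, -γ, R.neg_mem γ hγ, ?_, ?_, ?_⟩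
  · rw [R.ht_neg hSg hβ]; omega
  · rw [R.ht_neg hSg hγ]; omega
  · rw [← neg_add, hbg, neg_neg]

end RootSystemBase

/-- The root space decomposition data of a complex semisimple Lie algebra `L` with
root system `base`: a Cartan subalgebra `H`, one-dimensional root spaces `rs β`,
and the standard bracket relations among them. -/
structure GradedLieData (V : Type*) [NormedAddCommGroup V] [InnerProductSpace ℝ V]
    (L : Type*) [LieRing L] [LieAlgebra ℂ L] where
  /-- the underlying root system with base -/
  base : RootSystemBase V
  /-- the Cartan subalgebra -/
  H : Submodule ℂ L
  /-- the root spaces -/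
  rs : V → Submodule ℂ L
  rs_dim : ∀ β ∈ base.Δ, Module.finrank ℂ ↥(rs β) = 1
  rs_bot : ∀ v : V, v ∉ base.Δ → rs v = ⊥
  sup_eq_top : H ⊔ (⨆ β ∈ base.Δ, rs β) = ⊤
  h_indep : Disjoint H (⨆ β ∈ base.Δ, rs β)
  rs_indep : ∀ β ∈ base.Δ, Disjoint (rs β) (H ⊔ ⨆ γ ∈ base.Δ.erase β, rs γ)
  /-- `toH v` is the element of the Cartan subalgebra representing `v` via the Killing
  form -/
  toH : V → L
  toH_mem : ∀ v : V, toH v ∈ H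
  toH_add : ∀ u v : V, toH (u + v) = toH u + toH v
  H_span : H = Submodule.span ℂ (toH '' ↑base.Δ0)
  br_toH : ∀ v : V, ∀ β ∈ base.Δ, ∀ x ∈ rs β, ⁅toH v, x⁆ = ((⟪β, v⟫ : ℝ) : ℂ) • x
  br_h_h : ∀ h ∈ H, ∀ h' ∈ H, ⁅h, h'⁆ = (0 : L)
  br_h_rs : ∀ β ∈ base.Δ, ∀ h ∈ H, ∀ x ∈ rs β, ⁅h, x⁆ ∈ rs β
  br_rs_mem : ∀ β ∈ base.Δ, ∀ γ ∈ base.Δ, β + γ ∈ base.Δ →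
      ∀ x ∈ rs β, ∀ y ∈ rs γ, ⁅x, y⁆ ∈ rs (β + γ)
  br_rs_zero : ∀ β ∈ base.Δ, ∀ γ ∈ base.Δ, β + γ ∉ base.Δ → β + γ ≠ 0 →
      ∀ x ∈ rs β, ∀ y ∈ rs γ, ⁅x, y⁆ = (0 : L)
  br_rs_opp : ∀ β ∈ base.Δ, ∀ x ∈ rs β, ∀ y ∈ rs (-β),
      ⁅x, y⁆ ∈ Submodule.span ℂ ({toH β} : Set L)
  br_nondeg : ∀ β ∈ base.Δ, ∀ γ ∈ base.Δ, β + γ ∈ base.Δ →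
      ∀ x ∈ rs β, ∀ y ∈ rs γ, ⁅x, y⁆ = (0 : L) → x = 0 ∨ y = 0

namespace GradedLieData

variable {V : Type*} [NormedAddCommGroup V] [InnerProductSpace ℝ V]
variable {L : Type*} [LieRing L] [LieAlgebra ℂ L]

variable (G : GradedLieData V L)

/-- The grading component `𝔤ⱼ` of the grading of `L` determined by the subset `Sg`
of the simple roots. -/
def g (Sg : Finset V) (j : ℤ) : Submodule ℂ L :=
  if j = 0 then G.H ⊔ ⨆ β ∈ G.base.Δ.filter (fun β => G.base.ht Sg β = 0), G.rs β
  else ⨆ β ∈ G.base.Δ.filter (fun β => G.base.ht Sg β = j), G.rs β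

/-- The grading of `L` determined by `Sg` is of *Monge type*: the component `𝔤₋₁`
contains a nonzero abelian subalgebra `Y` of codimension one with
`dim 𝔤₋₂ = dim Y`. -/
def Monge (Sg : Finset V) : Prop :=
  ∃ Y : Submodule ℂ L, Y ≤ G.g Sg (-1) ∧ Y ≠ ⊥ ∧
    (∀ a ∈ Y, ∀ b ∈ Y, ⁅a, b⁆ = (0 : L)) ∧
    Module.finrank ℂ ↥Y + 1 = Module.finrank ℂ ↥(G.g Sg (-1)) ∧
    Module.finrank ℂ ↥(G.g Sg (-2)) = Module.finrank ℂ ↥Y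

end GradedLieData

namespace GradedLieData

variable {V : Type*} [NormedAddCommGroup V] [InnerProductSpace ℝ V]
variable {L : Type*} [LieRing L] [LieAlgebra ℂ L]

/-- The set of elements whose bracket with every element of `X` lies in `N`. -/
def stab (X N : Submodule ℂ L) : Submodule ℂ L where
  carrier := {u : L | ∀ x ∈ X, ⁅u, x⁆ ∈ N}
  add_mem' := fun {a b} ha hb x hx => by rw [add_lie]; exact N.add_mem (ha x hx) (hb x hx)
  zero_mem' := fun x hx => by rw [zero_lie]; exact N.zero_mem
  smul_mem' := fun c a ha x hx => by rw [smul_lie]; exact N.smul_mem c (ha x hx)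

lemma mem_stab {X N : Submodule ℂ L} {u : L} : u ∈ stab X N ↔ ∀ x ∈ X, ⁅u, x⁆ ∈ N := Iff.rfl

/-- The set of elements whose bracket with `u` (on the left) lies in `N`. -/
def rstab (u : L) (N : Submodule ℂ L) : Submodule ℂ L where
  carrier := {v : L | ⁅u, v⁆ ∈ N}
  add_mem' := fun {a b} ha hb => by show ⁅u, a + b⁆ ∈ N; rw [lie_add]; exact N.add_mem ha hb
  zero_mem' := by show ⁅u, (0:L)⁆ ∈ N; rw [lie_zero]; exact N.zero_mem
  smul_mem' := fun c a ha => by show ⁅u, c • a⁆ ∈ N; rw [lie_smul]; exact N.smul_mem c ha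

lemma mem_rstab {u : L} {N : Submodule ℂ L} {v : L} : v ∈ rstab u N ↔ ⁅u, v⁆ ∈ N := Iff.rfl

variable (G : GradedLieData V L)

lemma g_neg (Sg : Finset V) {j : ℤ} (hj : j ≠ 0) :
    G.g Sg j = ⨆ β ∈ G.base.Δ.filter (fun β => G.base.ht Sg β = j), G.rs β := if_neg hj

lemma g_zero (Sg : Finset V) :
    G.g Sg 0 = G.H ⊔ ⨆ β ∈ G.base.Δ.filter (fun β => G.base.ht Sg β = 0), G.rs β := if_pos rfl

lemma H_le_g_zero (Sg : Finset V) : G.H ≤ G.g Sg 0 := by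
  rw [g_zero]; exact le_sup_left

lemma rs_le_g (Sg : Finset V) {β : V} (hβ : β ∈ G.base.Δ) {j : ℤ}
    (hht : G.base.ht Sg β = j) : G.rs β ≤ G.g Sg j := by
  have hβf : β ∈ G.base.Δ.filter (fun β => G.base.ht Sg β = j) :=
    Finset.mem_filter.mpr ⟨hβ, hht⟩
  by_cases hj : j = 0
  · subst hj
    rw [g_zero]
    exact le_trans (le_iSup₂ (f := fun β _ => G.rs β) β hβf) le_sup_right
  · rw [g_neg _ _ hj]
    exact le_iSup₂ (f := fun β _ => G.rs β) β hβf

lemma sum_rs_eq_zero {s : Finset V} (hs : s ⊆ G.base.Δ) {f : V → L}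
    (hf : ∀ β ∈ s, f β ∈ G.rs β) (hsum : ∑ β ∈ s, f β = 0) : ∀ β ∈ s, f β = 0 := by
  intro β hβ
  have heq : f β = -∑ γ ∈ s.erase β, f γ := by
    have h := Finset.add_sum_erase s f hβ
    rw [hsum] at h
    exact eq_neg_of_add_eq_zero_left h
  have hmem : f β ∈ G.H ⊔ ⨆ γ ∈ G.base.Δ.erase β, G.rs γ := by
    rw [heq]
    apply Submodule.neg_mem
    apply Submodule.sum_mem
    intro γ hγ
    have hγs : γ ∈ s := Finset.mem_of_mem_erase hγ
    have hγΔ : γ ∈ G.base.Δ.erase β :=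
      Finset.mem_erase.mpr ⟨(Finset.mem_erase.mp hγ).1, hs hγs⟩
    exact Submodule.mem_sup_right (le_iSup₂ (f := fun γ _ => G.rs γ) γ hγΔ (hf γ hγs))
  exact (Submodule.disjoint_def.mp (G.rs_indep β (hs hβ))) _ (hf β hβ) hmem

variable [FiniteDimensional ℂ L]

lemma finrank_sup_rs : ∀ s : Finset V, s ⊆ G.base.Δ →
    Module.finrank ℂ ↥(⨆ β ∈ s, G.rs β) = s.card := by
  intro s
  induction s using Finset.induction_on with
  | empty => simp
  | @insert a s' ha IH =>
    intro hsub
    have haΔ : a ∈ G.base.Δ := hsub (Finset.mem_insert_self a s')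
    have hs'Δ : s' ⊆ G.base.Δ := fun b hb => hsub (Finset.mem_insert_of_mem hb)
    rw [Finset.iSup_insert]
    have hle : (⨆ β ∈ s', G.rs β) ≤ G.H ⊔ ⨆ γ ∈ G.base.Δ.erase a, G.rs γ := by
      apply iSup₂_le
      intro β hβ
      have hβΔ : β ∈ G.base.Δ.erase a :=
        Finset.mem_erase.mpr ⟨fun h => ha (h ▸ hβ), hs'Δ hβ⟩
      exact le_trans (le_iSup₂ (f := fun γ _ => G.rs γ) β hβΔ) le_sup_right
    have hdisj : Disjoint (G.rs a) (⨆ β ∈ s', G.rs β) :=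
      (G.rs_indep a haΔ).mono_right hle
    have hrank := Submodule.finrank_sup_add_finrank_inf_eq (G.rs a) (⨆ β ∈ s', G.rs β)
    rw [hdisj.eq_bot, finrank_bot, add_zero] at hrank
    rw [hrank, G.rs_dim a haΔ, IH hs'Δ, Finset.card_insert_of_notMem ha]
    omega

lemma g_zero_bracket (Sg : Finset V) (hSg : Sg ⊆ G.base.Δ0) {j : ℤ} (hj : j ≠ 0) :
    ∀ u ∈ G.g Sg 0, ∀ v ∈ G.g Sg j, ⁅u, v⁆ ∈ G.g Sg j := by
  suffices h : G.g Sg 0 ≤ stab (G.g Sg j) (G.g Sg j) by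
    intro u hu v hv
    exact h hu v hv
  rw [g_zero]
  apply sup_le
  · -- Cartan part
    intro h hH
    rw [mem_stab]
    suffices hgj : G.g Sg j ≤ rstab h (G.g Sg j) by
      intro v hv; exact hgj hv
    conv_lhs => rw [g_neg _ _ hj]
    apply iSup₂_le
    intro β hβm
    obtain ⟨hβΔ, hβht⟩ := Finset.mem_filter.mp hβm
    intro v hv
    rw [mem_rstab]
    exact G.rs_le_g Sg hβΔ hβht (G.br_h_rs β hβΔ h hH v hv)
  · -- height-zero root spaces
    apply iSup₂_le
    intro α hαm
    obtain ⟨hαΔ, hα0⟩ := Finset.mem_filter.mp hαm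
    intro u hu
    rw [mem_stab]
    suffices hgj : G.g Sg j ≤ rstab u (G.g Sg j) by
      intro v hv; exact hgj hv
    conv_lhs => rw [g_neg _ _ hj]
    apply iSup₂_le
    intro β hβm
    obtain ⟨hβΔ, hβht⟩ := Finset.mem_filter.mp hβm
    intro v hv
    rw [mem_rstab]
    by_cases hr : α + β ∈ G.base.Δ
    · have hht : G.base.ht Sg (α + β) = j := by
        rw [G.base.ht_add hSg hαΔ hβΔ hr, hα0, hβht]; ring
      exact G.rs_le_g Sg hr hht (G.br_rs_mem α hαΔ β hβΔ hr u hu v hv)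
    · have hne0 : α + β ≠ 0 := by
        intro heq
        have hβα : β = -α := by rw [eq_neg_iff_add_eq_zero, add_comm]; exact heq
        rw [hβα, G.base.ht_neg hSg hαΔ, hα0] at hβht
        omega
      rw [G.br_rs_zero α hαΔ β hβΔ hr hne0 u hu v hv]
      exact Submodule.zero_mem _

end GradedLieData

lemma exists_separating {V : Type*} [NormedAddCommGroup V] [InnerProductSpace ℝ V]
    (W : Submodule ℝ V) (D : Finset V) (hD : ∀ d ∈ D, d ∈ W ∧ d ≠ 0) :
    ∃ w ∈ W, ∀ d ∈ D, ⟪d, w⟫ ≠ 0 := by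
  induction D using Finset.induction_on with
  | empty => exact ⟨0, W.zero_mem, by simp⟩
  | @insert d D' hd IH =>
    obtain ⟨w, hwW, hw⟩ := IH (fun d' hd' => hD d' (Finset.mem_insert_of_mem hd'))
    have hdW : d ∈ W := (hD d (Finset.mem_insert_self d D')).1
    have hdne : d ≠ 0 := (hD d (Finset.mem_insert_self d D')).2
    have hdd : (0:ℝ) < ⟪d, d⟫ := by
      rw [real_inner_self_eq_norm_sq]
      have h : 0 < ‖d‖ := norm_pos_iff.mpr hdne
      positivity
    obtain ⟨ε, hε⟩ := Infinite.exists_notMem_finset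
      (insert (-⟪d, w⟫ / ⟪d, d⟫) (D'.image (fun d' => -⟪d', w⟫ / ⟪d', d⟫)))
    refine ⟨w + ε • d, W.add_mem hwW (W.smul_mem ε hdW), ?_⟩
    intro d' hd'
    rw [inner_add_right, real_inner_smul_right]
    rcases Finset.mem_insert.mp hd' with rfl | hd'D
    · intro h0
      apply hε
      have hεeq : ε = -⟪d', w⟫ / ⟪d', d'⟫ := by
        field_simp
        linarith
      rw [hεeq]
      exact Finset.mem_insert_self _ _
    · by_cases hzero : ⟪d', d⟫ = 0
      · rw [hzero, mul_zero, add_zero]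
        exact hw d' hd'D
      · intro h0
        apply hε
        have hεeq : ε = -⟪d', w⟫ / ⟪d', d⟫ := by
          field_simp
          linarith
        rw [hεeq]
        exact Finset.mem_insert_of_mem (Finset.mem_image_of_mem _ hd'D)

/-- For a grading of Monge type of a complex semisimple Lie algebra
with `dim 𝔤₋₁ > 2`, the codimension-one abelian subalgebra `Y ⊆ 𝔤₋₁` is invariant under
the adjoint action of `𝔤₀`, and it admits a one-dimensional `𝔤₀`-invariant complement
`X` in `𝔤₋₁`. -/
theorem statement2 {V : Type*} [NormedAddCommGroup V] [InnerProductSpace ℝ V]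
    {L : Type*} [LieRing L] [LieAlgebra ℂ L] [FiniteDimensional ℂ L]
    (G : GradedLieData V L) (Sg : Finset V) (hSg : Sg ⊆ G.base.Δ0) (hne : Sg.Nonempty)
    (hdim : 2 < Module.finrank ℂ ↥(G.g Sg (-1)))
    (Y : Submodule ℂ L) (hY1 : Y ≤ G.g Sg (-1)) (hY0 : Y ≠ ⊥)
    (hYab : ∀ a ∈ Y, ∀ b ∈ Y, ⁅a, b⁆ = (0 : L))
    (hYcodim : Module.finrank ℂ ↥Y + 1 = Module.finrank ℂ ↥(G.g Sg (-1)))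
    (hYdim : Module.finrank ℂ ↥(G.g Sg (-2)) = Module.finrank ℂ ↥Y) :
    (∀ u ∈ G.g Sg 0, ∀ y ∈ Y, ⁅u, y⁆ ∈ Y) ∧
    ∃ X : Submodule ℂ L, Module.finrank ℂ ↥X = 1 ∧
      (∀ u ∈ G.g Sg 0, ∀ x ∈ X, ⁅u, x⁆ ∈ X) ∧
      X ⊔ Y = G.g Sg (-1) ∧ X ⊓ Y = ⊥ := by
  classical
  set R := G.base with hR
  set F1 := R.Δ.filter (fun β => R.ht Sg β = -1) with hF1
  set F2 := R.Δ.filter (fun β => R.ht Sg β = -2) with hF2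
  have hg1 : G.g Sg (-1) = ⨆ β ∈ F1, G.rs β := G.g_neg Sg (by norm_num)
  have hg2 : G.g Sg (-2) = ⨆ β ∈ F2, G.rs β := G.g_neg Sg (by norm_num)
  have hF1Δ : F1 ⊆ R.Δ := Finset.filter_subset _ _
  have hF2Δ : F2 ⊆ R.Δ := Finset.filter_subset _ _
  have rs_nonzero : ∀ β ∈ R.Δ, ∃ e ∈ G.rs β, e ≠ 0 := by
    intro β hβ
    have h1 := G.rs_dim β hβ
    by_contra hcon
    push_neg at hcon
    have hbot : G.rs β = ⊥ := (Submodule.eq_bot_iff _).mpr hcon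
    rw [hbot] at h1
    simp at h1
  -- choose x ∈ 𝔤₋₁ \ Y
  have hYlt : Y < G.g Sg (-1) := by
    apply lt_of_le_of_ne hY1
    intro h
    rw [h] at hYcodim
    omega
  obtain ⟨x, hxg, hxY⟩ := SetLike.exists_of_lt hYlt
  -- Y together with x spans 𝔤₋₁
  have hxspan : Y ⊔ Submodule.span ℂ {x} = G.g Sg (-1) := by
    apply Submodule.eq_of_le_of_finrank_le
    · apply sup_le hY1
      rw [Submodule.span_le]
      simpa using hxg
    · have hlt : Y < Y ⊔ Submodule.span ℂ {x} := by
        apply lt_of_le_of_ne le_sup_left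
        intro h
        have hx2 : x ∈ Y ⊔ Submodule.span ℂ {x} :=
          Submodule.mem_sup_right (Submodule.mem_span_singleton_self x)
        rw [← h] at hx2
        exact hxY hx2
      have := Submodule.finrank_lt_finrank_of_lt hlt
      omega
  have hdecomp : ∀ v ∈ G.g Sg (-1), ∃ c : ℂ, ∃ y ∈ Y, v = y + c • x := by
    intro v hv
    rw [← hxspan] at hv
    obtain ⟨y, hy, z, hz, hsum⟩ := Submodule.mem_sup.mp hv
    obtain ⟨c, rfl⟩ := Submodule.mem_span_singleton.mp hz
    exact ⟨c, y, hy, hsum.symm⟩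
  -- all brackets of 𝔤₋₁ lie in M = [x, Y]
  set M := Submodule.map (LieAlgebra.ad ℂ L x) Y with hM
  have hMmem : ∀ y ∈ Y, ⁅x, y⁆ ∈ M := by
    intro y hy
    rw [hM]
    have := Submodule.mem_map_of_mem (f := LieAlgebra.ad ℂ L x) hy
    simpa [LieAlgebra.ad_apply] using this
  have hbr_in_M : ∀ v ∈ G.g Sg (-1), ∀ w ∈ G.g Sg (-1), ⁅v, w⁆ ∈ M := by
    intro v hv w hw
    obtain ⟨c, y, hy, rfl⟩ := hdecomp v hv
    obtain ⟨c', y', hy', rfl⟩ := hdecomp w hw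
    have hexp : ⁅y + c • x, y' + c' • x⁆ = c • ⁅x, y'⁆ - c' • ⁅x, y⁆ := by
      rw [lie_add, add_lie, add_lie, hYab y hy y' hy', lie_smul, lie_smul, smul_lie,
        smul_lie, lie_self, smul_zero, smul_zero, ← lie_skew x y]
      module
    rw [hexp]
    exact M.sub_mem (M.smul_mem _ (hMmem y' hy')) (M.smul_mem _ (hMmem y hy))
  -- 𝔤₋₂ is contained in M
  have hg2M : G.g Sg (-2) ≤ M := by
    rw [hg2]
    apply iSup₂_le
    intro δ hδm
    obtain ⟨hδΔ, hδht⟩ := Finset.mem_filter.mp hδm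
    obtain ⟨β, hβ, γ, hγ, hb, hg, hbg⟩ := R.ht_neg_two_decomp hSg hδΔ hδht
    obtain ⟨e, he, hene⟩ := rs_nonzero β hβ
    obtain ⟨f, hf, hfne⟩ := rs_nonzero γ hγ
    have hδΔ' : β + γ ∈ R.Δ := by rw [hbg]; exact hδΔ
    have hef : ⁅e, f⁆ ∈ G.rs δ := by
      have := G.br_rs_mem β hβ γ hγ hδΔ' e he f hf
      rwa [hbg] at this
    have hefne : ⁅e, f⁆ ≠ 0 := by
      intro h0
      rcases G.br_nondeg β hβ γ hγ hδΔ' e he f hf h0 with h | h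
      exacts [hene h, hfne h]
    have hspan : G.rs δ = Submodule.span ℂ {⁅e, f⁆} := by
      symm
      apply Submodule.eq_of_le_of_finrank_le
      · rw [Submodule.span_le]
        simpa using hef
      · rw [G.rs_dim δ hδΔ, finrank_span_singleton hefne]
    rw [hspan, Submodule.span_le]
    rw [Set.singleton_subset_iff]
    exact hbr_in_M e (G.rs_le_g Sg hβ hb he) f (G.rs_le_g Sg hγ hg hf)
  have hM2 : 2 ≤ Module.finrank ℂ ↥M := by
    have h := Submodule.finrank_mono hg2M
    omega
  -- Goal 1: Y is 𝔤₀-invariant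
  have goal1 : ∀ u ∈ G.g Sg 0, ∀ y ∈ Y, ⁅u, y⁆ ∈ Y := by
    intro u hu y hy
    have huy : ⁅u, y⁆ ∈ G.g Sg (-1) :=
      G.g_zero_bracket Sg hSg (by norm_num) u hu _ (hY1 hy)
    obtain ⟨c, y₀, hy₀, hre⟩ := hdecomp _ huy
    by_cases hc : c = 0
    · rw [hre, hc, zero_smul, add_zero]
      exact hy₀
    exfalso
    have hkey : ∀ y'' ∈ Y, ⁅x, y''⁆ ∈ Submodule.span ℂ {⁅x, y⁆} := by
      intro y'' hy''
      have huy'' : ⁅u, y''⁆ ∈ G.g Sg (-1) :=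
        G.g_zero_bracket Sg hSg (by norm_num) u hu _ (hY1 hy'')
      obtain ⟨c'', y₀'', hy₀'', hre''⟩ := hdecomp _ huy''
      have hjac : ⁅u, ⁅y, y''⁆⁆ = ⁅⁅u, y⁆, y''⁆ + ⁅y, ⁅u, y''⁆⁆ := leibniz_lie u y y''
      rw [hYab y hy y'' hy'', lie_zero, hre, hre''] at hjac
      have hexp : (0:L) = c • ⁅x, y''⁆ - c'' • ⁅x, y⁆ := by
        rw [hjac, add_lie, lie_add, hYab y₀ hy₀ y'' hy'', hYab y hy y₀'' hy₀'',
          smul_lie, lie_smul, ← lie_skew x y]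
        module
      have hcc : c • ⁅x, y''⁆ = c'' • ⁅x, y⁆ := sub_eq_zero.mp hexp.symm
      have h2 : ⁅x, y''⁆ ∈ Submodule.span ℂ {⁅x, y⁆} := by
        have hsm : c • ⁅x, y''⁆ ∈ Submodule.span ℂ {⁅x, y⁆} := by
          rw [hcc]
          exact Submodule.smul_mem _ _ (Submodule.mem_span_singleton_self _)
        have := Submodule.smul_mem _ c⁻¹ hsm
        rwa [smul_smul, inv_mul_cancel₀ hc, one_smul] at this
      exact h2
    have hMle : M ≤ Submodule.span ℂ {⁅x, y⁆} := by
      rw [hM]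
      rintro z ⟨y'', hy'', rfl⟩
      have := hkey y'' hy''
      simpa [LieAlgebra.ad_apply] using this
    have hle1 : Module.finrank ℂ ↥M ≤ 1 := by
      refine le_trans (Submodule.finrank_mono hMle) ?_
      by_cases h0 : ⁅x, y⁆ = (0:L)
      · rw [h0, Submodule.span_zero_singleton]
        simp
      · rw [finrank_span_singleton h0]
    omega
  refine ⟨goal1, ?_⟩
  -- Part 2: construct the invariant complement
  have hΔspan : ∀ β ∈ R.Δ, β ∈ Submodule.span ℝ (R.Δ0 : Set V) := by
    intro β hβ
    rw [R.coeff_spec β hβ]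
    exact Submodule.sum_mem _ fun a ha =>
      Submodule.smul_mem _ _ (Submodule.subset_span ha)
  set D : Finset V := ((F1 ×ˢ F1).filter (fun p => p.1 ≠ p.2)).image
    (fun p => p.1 - p.2) with hD
  have hDprop : ∀ d ∈ D, d ∈ Submodule.span ℝ (R.Δ0 : Set V) ∧ d ≠ 0 := by
    intro d hd
    rw [hD] at hd
    obtain ⟨p, hp, rfl⟩ := Finset.mem_image.mp hd
    obtain ⟨hpm, hpne⟩ := Finset.mem_filter.mp hp
    obtain ⟨h1, h2⟩ := Finset.mem_product.mp hpm
    exact ⟨Submodule.sub_mem _ (hΔspan _ (hF1Δ h1)) (hΔspan _ (hF1Δ h2)),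
      sub_ne_zero.mpr hpne⟩
  obtain ⟨w, hwW, hw⟩ := exists_separating _ D hDprop
  obtain ⟨cw, -, hcw⟩ := Submodule.mem_span_finset.mp hwW
  have hsep : ∀ β ∈ F1, ∀ γ ∈ F1, β ≠ γ → ⟪β - γ, w⟫ ≠ 0 := by
    intro β hβ γ hγ hne'
    apply hw
    rw [hD]
    have hp : ((β, γ) : V × V) ∈ (F1 ×ˢ F1).filter (fun p => p.1 ≠ p.2) :=
      Finset.mem_filter.mpr ⟨Finset.mem_product.mpr ⟨hβ, hγ⟩, hne'⟩
    exact Finset.mem_image_of_mem (fun p : V × V => p.1 - p.2) hp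
  set T : Module.End ℂ L := ∑ a ∈ R.Δ0, (cw a : ℂ) • (LieAlgebra.ad ℂ L (G.toH a)) with hT
  have hTY : ∀ y ∈ Y, T y ∈ Y := by
    intro y hy
    rw [hT, LinearMap.sum_apply]
    apply Submodule.sum_mem
    intro a _
    rw [LinearMap.smul_apply]
    apply Submodule.smul_mem
    have h := goal1 _ (G.H_le_g_zero Sg (G.toH_mem a)) y hy
    simpa [LieAlgebra.ad_apply] using h
  have hTeig : ∀ β ∈ R.Δ, ∀ z ∈ G.rs β, T z = ((⟪β, w⟫ : ℝ) : ℂ) • z := by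
    intro β hβ z hz
    rw [hT, LinearMap.sum_apply]
    have hterm : ∀ a ∈ R.Δ0, ((cw a : ℂ) • LieAlgebra.ad ℂ L (G.toH a)) z
        = (((cw a * ⟪β, a⟫ : ℝ)) : ℂ) • z := by
      intro a _
      rw [LinearMap.smul_apply, LieAlgebra.ad_apply, G.br_toH a β hβ z hz, smul_smul]
      norm_cast
    rw [Finset.sum_congr rfl hterm, ← Finset.sum_smul]
    congr 1
    have hiw : ⟪β, w⟫ = ∑ a ∈ R.Δ0, cw a * ⟪β, a⟫ := by
      rw [← hcw, inner_sum]
      exact Finset.sum_congr rfl fun a _ => real_inner_smul_right _ _ _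
    rw [hiw]
    push_cast
    rfl
  -- Vandermonde-type argument: root components of elements of Y lie in Y
  have hvand : ∀ s : Finset V, s ⊆ F1 → ∀ f : V → L, (∀ β ∈ s, f β ∈ G.rs β) →
      (∑ β ∈ s, f β) ∈ Y → ∀ β ∈ s, f β ∈ Y := by
    intro s
    induction s using Finset.induction_on with
    | empty => intro _ f _ _ β hβ; simp at hβ
    | @insert β₀ s' hβ₀ IH =>
      intro hsub f hf hsum
      have hs'F : s' ⊆ F1 := fun b hb => hsub (Finset.mem_insert_of_mem hb)
      have hβ₀F : β₀ ∈ F1 := hsub (Finset.mem_insert_self _ _)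
      have hstep : (∑ β ∈ s', ((((⟪β, w⟫ : ℝ) : ℂ) - ((⟪β₀, w⟫ : ℝ) : ℂ)) • f β)) ∈ Y := by
        have h1 : T (∑ β ∈ insert β₀ s', f β)
            - ((⟪β₀, w⟫ : ℝ) : ℂ) • (∑ β ∈ insert β₀ s', f β) ∈ Y :=
          Y.sub_mem (hTY _ hsum) (Y.smul_mem _ hsum)
        have h2 : T (∑ β ∈ insert β₀ s', f β)
            = ∑ β ∈ insert β₀ s', ((⟪β, w⟫ : ℝ) : ℂ) • f β := by
          rw [map_sum]
          exact Finset.sum_congr rfl fun β hβ =>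
            hTeig β (hF1Δ (hsub hβ)) (f β) (hf β hβ)
        rw [h2, Finset.smul_sum, ← Finset.sum_sub_distrib] at h1
        have h3 : (∑ β ∈ insert β₀ s',
            (((⟪β, w⟫ : ℝ) : ℂ) • f β - ((⟪β₀, w⟫ : ℝ) : ℂ) • f β))
            = ∑ β ∈ s', ((((⟪β, w⟫ : ℝ) : ℂ) - ((⟪β₀, w⟫ : ℝ) : ℂ)) • f β) := by
          rw [Finset.sum_insert hβ₀, sub_self, zero_add]
          exact Finset.sum_congr rfl fun β _ => (sub_smul _ _ _).symm
        rwa [h3] at h1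
      have hall : ∀ β ∈ s', f β ∈ Y := by
        intro β hβ
        have hmem := IH hs'F
          (fun β => ((((⟪β, w⟫ : ℝ) : ℂ) - ((⟪β₀, w⟫ : ℝ) : ℂ)) • f β))
          (fun β hβ' => Submodule.smul_mem _ _ (hf β (Finset.mem_insert_of_mem hβ')))
          hstep β hβ
        have hnez : (((⟪β, w⟫ : ℝ) : ℂ) - ((⟪β₀, w⟫ : ℝ) : ℂ)) ≠ 0 := by
          have hβne : β ≠ β₀ := fun h => hβ₀ (h ▸ hβ)
          have hs := hsep β (hs'F hβ) β₀ hβ₀F hβne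
          rw [inner_sub_left] at hs
          intro h0
          have hcast : ((⟪β, w⟫ : ℝ) : ℂ) = ((⟪β₀, w⟫ : ℝ) : ℂ) := sub_eq_zero.mp h0
          have hreal : ⟪β, w⟫ = ⟪β₀, w⟫ := by exact_mod_cast hcast
          exact hs (sub_eq_zero.mpr hreal)
        have hsm := Y.smul_mem ((((⟪β, w⟫ : ℝ) : ℂ) - ((⟪β₀, w⟫ : ℝ) : ℂ))⁻¹) hmem
        rwa [smul_smul, inv_mul_cancel₀ hnez, one_smul] at hsm
      intro β hβ
      rcases Finset.mem_insert.mp hβ with rfl | hβs'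
      · have heq : f β = (∑ γ ∈ insert β s', f γ) - ∑ γ ∈ s', f γ := by
          rw [Finset.sum_insert hβ₀]
          abel
        rw [heq]
        exact Y.sub_mem hsum (Submodule.sum_mem _ hall)
      · exact hall β hβs'
  -- Y is the sum of the root spaces it contains
  set S := F1.filter (fun β => G.rs β ≤ Y) with hS
  have hSsub : S ⊆ F1 := Finset.filter_subset _ _
  have hYS : Y = ⨆ β ∈ S, G.rs β := by
    apply le_antisymm
    · intro y hy
      have hyg : y ∈ ⨆ β ∈ F1, G.rs β := by rw [← hg1]; exact hY1 hy
      obtain ⟨μf, hμf⟩ := (Submodule.mem_iSup_finset_iff_exists_sum _ _).mp hyg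
      have hf : ∀ β ∈ F1, (μf β : L) ∈ G.rs β := fun β _ => (μf β).property
      have hcomp : ∀ β ∈ F1, (μf β : L) ∈ Y :=
        hvand F1 (Finset.Subset.refl _) _ hf (by rw [hμf]; exact hy)
      rw [← hμf]
      apply Submodule.sum_mem
      intro β hβ
      by_cases h0 : (μf β : L) = 0
      · rw [h0]; exact Submodule.zero_mem _
      · have hβΔ : β ∈ R.Δ := hF1Δ hβ
        have hrsY : G.rs β ≤ Y := by
          have hspan2 : G.rs β = Submodule.span ℂ {(μf β : L)} := by
            symm
            apply Submodule.eq_of_le_of_finrank_le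
            · rw [Submodule.span_le, Set.singleton_subset_iff]
              exact hf β hβ
            · rw [G.rs_dim β hβΔ, finrank_span_singleton h0]
          rw [hspan2, Submodule.span_le, Set.singleton_subset_iff]
          exact hcomp β hβ
        have hβS : β ∈ S := Finset.mem_filter.mpr ⟨hβ, hrsY⟩
        exact le_iSup₂ (f := fun β _ => G.rs β) β hβS (hf β hβ)
    · apply iSup₂_le
      intro β hβ
      exact (Finset.mem_filter.mp hβ).2
  have hcard1 : Module.finrank ℂ ↥(G.g Sg (-1)) = F1.card := by
    rw [hg1]; exact G.finrank_sup_rs F1 hF1Δ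
  have hcardY : Module.finrank ℂ ↥Y = S.card := by
    rw [hYS]; exact G.finrank_sup_rs S (fun b hb => hF1Δ (hSsub hb))
  have hcardle : S.card ≤ F1.card := Finset.card_le_card hSsub
  have hsd : (F1 \ S).card = 1 := by
    rw [Finset.card_sdiff_of_subset hSsub]
    omega
  obtain ⟨μ, hμ⟩ := Finset.card_eq_one.mp hsd
  have hμmem : μ ∈ F1 \ S := by rw [hμ]; exact Finset.mem_singleton_self μ
  have hμF1 : μ ∈ F1 := (Finset.mem_sdiff.mp hμmem).1
  have hμS : μ ∉ S := (Finset.mem_sdiff.mp hμmem).2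
  have hμΔ : μ ∈ R.Δ := hF1Δ hμF1
  have hμht : R.ht Sg μ = -1 := (Finset.mem_filter.mp hμF1).2
  have hother : ∀ β ∈ F1, β ≠ μ → β ∈ S := by
    intro β hβ hne'
    by_contra hcon
    have hmem2 : β ∈ F1 \ S := Finset.mem_sdiff.mpr ⟨hβ, hcon⟩
    rw [hμ] at hmem2
    exact hne' (Finset.mem_singleton.mp hmem2)
  have hYle : Y ≤ G.H ⊔ ⨆ γ ∈ R.Δ.erase μ, G.rs γ := by
    rw [hYS]
    apply iSup₂_le
    intro β hβ
    have hβμ : β ≠ μ := fun h => hμS (h ▸ hβ)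
    have hβer : β ∈ R.Δ.erase μ := Finset.mem_erase.mpr ⟨hβμ, hF1Δ (hSsub hβ)⟩
    exact le_trans (le_iSup₂ (f := fun γ _ => G.rs γ) β hβer) le_sup_right
  have hdisjXY : Disjoint (G.rs μ) Y := (G.rs_indep μ hμΔ).mono_right hYle
  refine ⟨G.rs μ, G.rs_dim μ hμΔ, ?_, ?_, hdisjXY.eq_bot⟩
  · -- invariance of X = rs μ under 𝔤₀
    suffices h : G.g Sg 0 ≤ GradedLieData.stab (G.rs μ) (G.rs μ) by
      intro u hu xx hxx
      exact h hu xx hxx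
    rw [G.g_zero]
    apply sup_le
    · intro h hH
      rw [GradedLieData.mem_stab]
      intro xx hxx
      exact G.br_h_rs μ hμΔ h hH xx hxx
    · apply iSup₂_le
      intro α hαm
      obtain ⟨hαΔ, hα0⟩ := Finset.mem_filter.mp hαm
      intro u hu
      rw [GradedLieData.mem_stab]
      intro xx hxx
      by_cases hr : α + μ ∈ R.Δ
      · exfalso
        have hhtαμ : R.ht Sg (α + μ) = -1 := by
          rw [R.ht_add hSg hαΔ hμΔ hr, hα0, hμht]
          ring
        have hαμF1 : α + μ ∈ F1 := Finset.mem_filter.mpr ⟨hr, hhtαμ⟩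
        have hαμne : α + μ ≠ μ := by
          intro h
          have hα00 : α = 0 := by
            have h2 := h
            rwa [add_eq_right] at h2
          exact R.ne_zero α hαΔ hα00
        have hαμS : α + μ ∈ S := hother _ hαμF1 hαμne
        have hnαΔ : -α ∈ R.Δ := R.neg_mem α hαΔ
        have hnα0 : R.ht Sg (-α) = 0 := by rw [R.ht_neg hSg hαΔ, hα0]; ring
        obtain ⟨e, he, hene⟩ := rs_nonzero _ hnαΔ
        obtain ⟨f, hf, hfne⟩ := rs_nonzero _ hr
        have hsumr : -α + (α + μ) = μ := by abel
        have hμΔ' : -α + (α + μ) ∈ R.Δ := by rw [hsumr]; exact hμΔ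
        have hbr : ⁅e, f⁆ ∈ G.rs μ := by
          have h := G.br_rs_mem _ hnαΔ _ hr hμΔ' e he f hf
          rwa [hsumr] at h
        have hbrY : ⁅e, f⁆ ∈ Y :=
          goal1 e (G.rs_le_g Sg hnαΔ hnα0 he) f ((Finset.mem_filter.mp hαμS).2 hf)
        have hzero : ⁅e, f⁆ = 0 :=
          Submodule.disjoint_def.mp hdisjXY _ hbr hbrY
        rcases G.br_nondeg _ hnαΔ _ hr hμΔ' e he f hf hzero with h | h
        exacts [hene h, hfne h]
      · have hne0 : α + μ ≠ 0 := by
          intro heq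
          have hμα : μ = -α := by rw [eq_neg_iff_add_eq_zero, add_comm]; exact heq
          rw [hμα, R.ht_neg hSg hαΔ, hα0] at hμht
          omega
        rw [G.br_rs_zero α hαΔ μ hμΔ hr hne0 u hu xx hxx]
        exact Submodule.zero_mem _
  · -- rs μ ⊔ Y = 𝔤₋₁
    apply le_antisymm
    · exact sup_le (G.rs_le_g Sg hμΔ hμht) hY1
    · rw [hg1]
      apply iSup₂_le
      intro β hβ
      by_cases hβμ : β = μ
      · rw [hβμ]; exact le_sup_left
      · exact le_trans (Finset.mem_filter.mp (hother β hβ hβμ)).2 le_sup_right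
end

section
/- Let 𝔤 be a complex semisimple Lie algebra whose grading determined by a nonempty subset Σ of the simple roots is of Monge type, with dim 𝔤₋₁ > 2, and let ζ ∈ Σ be the unique simple root (the leader) with 𝔵 = 𝔤_{−ζ}. Then Σ consists precisely of ζ together with all simple roots adjacent to ζ in the Dynkin diagram of 𝔤; that is, Σ = {ζ} ∪ {β ∈ Δ⁰ : β ≠ ζ and (β, ζ) ≠ 0}. -/
open scoped RealInnerProductSpace BigOperators Classical

section Comb

variable {V : Type*} [NormedAddCommGroup V] [InnerProductSpace ℝ V]

private lemma ipos {x : V} (h : x ≠ 0) : 0 < ⟪x, x⟫ := by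
  rw [real_inner_self_eq_norm_mul_norm]
  have := norm_pos_iff.mpr h
  positivity

variable (R : RootSystemBase V)

lemma RootSystemBase.coeff_unique_s4 {β : V} (hβ : β ∈ R.Δ) (c : V → ℝ)
    (h : β = ∑ α ∈ R.Δ0, c α • α) : ∀ α ∈ R.Δ0, c α = (R.coeff β α : ℝ) := by
  have h2 := R.coeff_spec β hβ
  have hz : ∑ α ∈ R.Δ0, (c α - (R.coeff β α : ℝ)) • α = 0 := by
    simp only [sub_smul, Finset.sum_sub_distrib, ← h, ← h2, sub_self]
  have hz2 : ∑ a : ↥R.Δ0, (c a.1 - (R.coeff β a.1 : ℝ)) • (a : V) = 0 := by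
    rw [← hz]; exact (Finset.sum_attach R.Δ0 fun x => (c x - (R.coeff β x : ℝ)) • x)
  have := Fintype.linearIndependent_iff.mp R.indep
    (fun a => c a.1 - (R.coeff β a.1 : ℝ)) hz2
  intro α hα
  have h4 : c α - (R.coeff β α : ℝ) = 0 := this ⟨α, hα⟩
  linarith

lemma RootSystemBase.coeff_simple_s4 {α : V} (hα : α ∈ R.Δ0) :
    ∀ α' ∈ R.Δ0, R.coeff α α' = if α' = α then 1 else 0 := by
  have h : α = ∑ x ∈ R.Δ0, (if x = α then (1:ℝ) else 0) • x := by
    simp only [ite_smul, one_smul, zero_smul]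
    rw [Finset.sum_ite_eq' R.Δ0 α (fun x => x)]
    simp [hα]
  intro α' hα'
  have := R.coeff_unique_s4 (R.base_sub hα) _ h α' hα'
  split_ifs at this ⊢ with h1
  · exact_mod_cast this.symm
  · exact_mod_cast this.symm

lemma RootSystemBase.coeff_add_s4 {β γ : V} (hβ : β ∈ R.Δ) (hγ : γ ∈ R.Δ)
    (hs : β + γ ∈ R.Δ) : ∀ α ∈ R.Δ0, R.coeff (β + γ) α = R.coeff β α + R.coeff γ α := by
  have h : β + γ = ∑ x ∈ R.Δ0, ((R.coeff β x : ℝ) + (R.coeff γ x : ℝ)) • x := by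
    simp only [add_smul, Finset.sum_add_distrib]
    rw [← R.coeff_spec β hβ, ← R.coeff_spec γ hγ]
  intro α hα
  have := R.coeff_unique_s4 hs _ h α hα
  exact_mod_cast this.symm

lemma RootSystemBase.coeff_neg_s4 {β : V} (hβ : β ∈ R.Δ) :
    ∀ α ∈ R.Δ0, R.coeff (-β) α = -R.coeff β α := by
  have h : -β = ∑ x ∈ R.Δ0, (-(R.coeff β x : ℝ)) • x := by
    simp only [neg_smul]
    rw [Finset.sum_neg_distrib, ← R.coeff_spec β hβ]
  intro α hα
  have := R.coeff_unique_s4 (R.neg_mem β hβ) _ h α hα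
  exact_mod_cast this.symm

lemma RootSystemBase.coeff_sub {β γ : V} (hβ : β ∈ R.Δ) (hγ : γ ∈ R.Δ)
    (hs : β - γ ∈ R.Δ) : ∀ α ∈ R.Δ0, R.coeff (β - γ) α = R.coeff β α - R.coeff γ α := by
  intro α hα
  have h1 : β - γ = β + (-γ) := sub_eq_add_neg β γ
  rw [h1]
  rw [R.coeff_add_s4 hβ (R.neg_mem γ hγ) (h1 ▸ hs) α hα, R.coeff_neg_s4 hγ α hα]
  ring

variable {Sg : Finset V}

lemma RootSystemBase.ht_add_s4 (hS : Sg ⊆ R.Δ0) {β γ : V} (hβ : β ∈ R.Δ) (hγ : γ ∈ R.Δ)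
    (hs : β + γ ∈ R.Δ) : R.ht Sg (β + γ) = R.ht Sg β + R.ht Sg γ := by
  unfold ht
  rw [← Finset.sum_add_distrib]
  exact Finset.sum_congr rfl fun α hα => R.coeff_add_s4 hβ hγ hs α (hS hα)

lemma RootSystemBase.ht_sub (hS : Sg ⊆ R.Δ0) {β γ : V} (hβ : β ∈ R.Δ) (hγ : γ ∈ R.Δ)
    (hs : β - γ ∈ R.Δ) : R.ht Sg (β - γ) = R.ht Sg β - R.ht Sg γ := by
  unfold ht
  rw [← Finset.sum_sub_distrib]
  exact Finset.sum_congr rfl fun α hα => R.coeff_sub hβ hγ hs α (hS hα)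

lemma RootSystemBase.ht_neg_s4 (hS : Sg ⊆ R.Δ0) {β : V} (hβ : β ∈ R.Δ) :
    R.ht Sg (-β) = -R.ht Sg β := by
  unfold ht
  rw [← Finset.sum_neg_distrib]
  exact Finset.sum_congr rfl fun α hα => R.coeff_neg_s4 hβ α (hS hα)

lemma RootSystemBase.ht_simple_s4 (hS : Sg ⊆ R.Δ0) {α : V} (hα : α ∈ R.Δ0) :
    R.ht Sg α = if α ∈ Sg then 1 else 0 := by
  unfold ht
  have : ∀ α' ∈ Sg, R.coeff α α' = if α' = α then 1 else 0 :=
    fun α' hα' => R.coeff_simple_s4 hα α' (hS hα')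
  rw [Finset.sum_congr rfl this, Finset.sum_ite_eq' Sg α (fun _ => (1:ℤ))]

lemma RootSystemBase.pos_of_ht_pos (hS : Sg ⊆ R.Δ0) {β : V} (hβ : β ∈ R.Δ)
    (h : 0 < R.ht Sg β) : ∀ α ∈ R.Δ0, 0 ≤ R.coeff β α := by
  rcases R.coeff_sign β hβ with h1 | h1
  · exact h1
  · exfalso
    have : R.ht Sg β ≤ 0 := Finset.sum_nonpos fun α hα => h1 α (hS hα)
    omega


lemma RootSystemBase.parallel {μ β : V} (hμ : μ ∈ R.Δ) (hβ : β ∈ R.Δ) {c : ℝ}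
    (h : μ = c • β) : c = 1 ∨ c = -1 := by
  have hβ0 : β ≠ 0 := R.ne_zero β hβ
  have hμ0 : μ ≠ 0 := R.ne_zero μ hμ
  have hc0 : c ≠ 0 := by rintro rfl; simp at h; exact hμ0 h
  have hββ : 0 < ⟪β, β⟫ := ipos hβ0
  obtain ⟨k, hk⟩ := R.crystal β hβ μ hμ
  obtain ⟨l, hl⟩ := R.crystal μ hμ β hβ
  have hμβ : ⟪μ, β⟫ = c * ⟪β, β⟫ := by rw [h, real_inner_smul_left]
  have hβμ : ⟪β, μ⟫ = c * ⟪β, β⟫ := by rw [real_inner_comm]; exact hμβ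
  have hμμ : ⟪μ, μ⟫ = c * c * ⟪β, β⟫ := by
    rw [h, real_inner_smul_left, real_inner_smul_right]; ring
  have hkc : (k : ℝ) = 2 * c := by
    rw [← hk, hμβ]; field_simp
  have hlc : (l : ℝ) * c = 2 := by
    rw [← hl, hβμ, hμμ]; field_simp
  have hkl : k * l = 4 := by
    have : ((k * l : ℤ) : ℝ) = 4 := by
      push_cast
      linear_combination (l : ℝ) * hkc + 2 * hlc
    exact_mod_cast this
  have hk0 : k ≠ 0 := by rintro rfl; simp at hkl
  have hkle : k ≤ 4 := Int.le_of_dvd (by norm_num) ⟨l, hkl.symm⟩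
  have hkge : -4 ≤ k := by
    have : -k ≤ 4 := Int.le_of_dvd (by norm_num) ⟨-l, by linarith [hkl]⟩
    omega
  have hcase : k = 1 ∨ k = -1 ∨ k = 2 ∨ k = -2 ∨ k = 4 ∨ k = -4 := by
    interval_cases k <;> omega
  rcases hcase with rfl | rfl | rfl | rfl | rfl | rfl
  · -- c = 1/2, β = 2 • μ
    exfalso
    apply R.reduced μ hμ
    have : β = (2 : ℝ) • μ := by
      rw [h, smul_smul]
      have : c = 1/2 := by push_cast at hkc; linarith
      rw [this]; norm_num
    rw [← this]; exact hβ
  · exfalso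
    apply R.reduced (-μ) (R.neg_mem μ hμ)
    have hc : c = -(1/2) := by push_cast at hkc; linarith
    have : β = (2 : ℝ) • (-μ) := by
      rw [h, smul_neg, smul_smul, hc]; norm_num
    rw [← this]; exact hβ
  · left; push_cast at hkc; linarith
  · right; push_cast at hkc; linarith
  · exfalso
    apply R.reduced β hβ
    have hc : c = 2 := by push_cast at hkc; linarith
    have h2 : μ = (2 : ℝ) • β := by rw [h, hc]
    rw [← h2]; exact hμ
  · exfalso
    apply R.reduced (-β) (R.neg_mem β hβ)
    have hc : c = -2 := by push_cast at hkc; linarith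
    have : μ = (2 : ℝ) • (-β) := by rw [h, smul_neg, hc]; norm_num
    rw [← this]; exact hμ

lemma RootSystemBase.strictCS {μ ν : V} (hμ : μ ∈ R.Δ) (hν : ν ∈ R.Δ)
    (h1 : μ ≠ ν) (h2 : μ ≠ -ν) : ⟪μ, ν⟫ * ⟪μ, ν⟫ < ⟪μ, μ⟫ * ⟪ν, ν⟫ := by
  have hμ0 : μ ≠ 0 := R.ne_zero μ hμ
  have hν0 : ν ≠ 0 := R.ne_zero ν hν
  have hne : ‖⟪ν, μ⟫‖ ≠ ‖ν‖ * ‖μ‖ := by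
    intro he
    obtain ⟨r, hr0, hr⟩ := (norm_inner_eq_norm_iff (𝕜 := ℝ) hν0 hμ0).mp he
    rcases R.parallel hμ hν hr with rfl | rfl
    · exact h1 (by simpa using hr)
    · exact h2 (by rw [hr]; simp)
  have hle : ‖⟪ν, μ⟫‖ < ‖ν‖ * ‖μ‖ := lt_of_le_of_ne (by
    rw [Real.norm_eq_abs]; exact abs_real_inner_le_norm ν μ) hne
  have habs : |⟪ν, μ⟫| < ‖ν‖ * ‖μ‖ := by rwa [Real.norm_eq_abs] at hle
  have h3 : ⟪ν, μ⟫ * ⟪ν, μ⟫ < (‖ν‖ * ‖μ‖) * (‖ν‖ * ‖μ‖) := by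
    nlinarith [abs_nonneg ⟪ν, μ⟫, le_abs_self ⟪ν, μ⟫, neg_abs_le ⟪ν, μ⟫]
  have h4 : ⟪μ, ν⟫ = ⟪ν, μ⟫ := real_inner_comm ν μ
  have h5 : ⟪μ, μ⟫ = ‖μ‖ * ‖μ‖ := real_inner_self_eq_norm_mul_norm μ
  have h6 : ⟪ν, ν⟫ = ‖ν‖ * ‖ν‖ := real_inner_self_eq_norm_mul_norm ν
  rw [h4, h5, h6]
  nlinarith [h3]

lemma RootSystemBase.sum_mem {μ ν : V} (hμ : μ ∈ R.Δ) (hν : ν ∈ R.Δ)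
    (hinner : ⟪μ, ν⟫ < 0) (hne : μ ≠ -ν) : μ + ν ∈ R.Δ := by
  have hμν : μ ≠ ν := by
    rintro rfl; exact absurd hinner (not_lt.mpr (real_inner_self_nonneg))
  have hμμ : 0 < ⟪μ, μ⟫ := ipos (R.ne_zero μ hμ)
  have hνν : 0 < ⟪ν, ν⟫ := ipos (R.ne_zero ν hν)
  obtain ⟨k, hk⟩ := R.crystal ν hν μ hμ
  obtain ⟨l, hl⟩ := R.crystal μ hμ ν hν
  have hkneg : (k : ℝ) < 0 := by
    rw [← hk]; apply div_neg_of_neg_of_pos; linarith; exact hνν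
  have hlneg : (l : ℝ) < 0 := by
    rw [← hl, real_inner_comm]; apply div_neg_of_neg_of_pos; linarith; exact hμμ
  have hkn : k ≤ -1 := by have : k < 0 := by exact_mod_cast hkneg
                          omega
  have hln : l ≤ -1 := by have : l < 0 := by exact_mod_cast hlneg
                          omega
  have hCS := R.strictCS hμ hν hμν hne
  have hprod : (k : ℝ) * (l : ℝ) < 4 := by
    have hx : (k : ℝ) = 2 * ⟪μ, ν⟫ / ⟪ν, ν⟫ := hk.symm
    have hy : (l : ℝ) = 2 * ⟪μ, ν⟫ / ⟪μ, μ⟫ := by rw [← hl, real_inner_comm]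
    rw [hx, hy, div_mul_div_comm, div_lt_iff₀ (by nlinarith [hμμ, hνν])]
    nlinarith [hCS, hμμ, hνν]
  have hklZ : k * l < 4 := by exact_mod_cast hprod
  have hone : k = -1 ∨ l = -1 := by
    by_contra hcon
    push_neg at hcon
    have h1 : k ≤ -2 := by omega
    have h2 : l ≤ -2 := by omega
    nlinarith
  rcases hone with hk1 | hl1
  · have := R.reflect_mem ν hν μ hμ
    rw [hk, hk1] at this
    simpa [sub_eq_add_neg, neg_smul] using this
  · have := R.reflect_mem μ hμ ν hν
    rw [hl, hl1] at this
    rw [show ν - ((-1 : ℤ) : ℝ) • μ = μ + ν by push_cast; module] at this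
    exact this

lemma RootSystemBase.diff_mem {μ ν : V} (hμ : μ ∈ R.Δ) (hν : ν ∈ R.Δ)
    (hinner : 0 < ⟪μ, ν⟫) (hne : μ ≠ ν) : μ - ν ∈ R.Δ := by
  have h1 : μ + (-ν) ∈ R.Δ := by
    apply R.sum_mem hμ (R.neg_mem ν hν)
    · rw [inner_neg_right]; linarith
    · rw [neg_neg]; exact hne
  simpa [sub_eq_add_neg] using h1

lemma RootSystemBase.mixed_not_mem {β ζ : V} (hβ : β ∈ R.Δ0) (hζ : ζ ∈ R.Δ0)
    (hne : β ≠ ζ) : β - ζ ∉ R.Δ := by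
  intro hmem
  have hc := R.coeff_sub (R.base_sub hβ) (R.base_sub hζ) hmem
  have hcβ : R.coeff (β - ζ) β = 1 := by
    rw [hc β hβ, R.coeff_simple_s4 hβ β hβ, R.coeff_simple_s4 hζ β hβ]
    simp [hne]
  have hcζ : R.coeff (β - ζ) ζ = -1 := by
    rw [hc ζ hζ, R.coeff_simple_s4 hβ ζ hζ, R.coeff_simple_s4 hζ ζ hζ]
    simp [Ne.symm hne]
  rcases R.coeff_sign (β - ζ) hmem with h | h
  · have := h ζ hζ; omega
  · have := h β hβ; omega

lemma RootSystemBase.simple_ne_neg {β ζ : V} (hβ : β ∈ R.Δ0) (hζ : ζ ∈ R.Δ0) :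
    β ≠ -ζ := by
  intro h
  by_cases heq : β = ζ
  · subst heq
    have h2 : (2 : ℝ) • β = 0 := by
      rw [two_smul]; nth_rewrite 1 [h]; abel
    have h0 : β = 0 := (smul_eq_zero.mp h2).resolve_left (by norm_num)
    exact R.ne_zero β (R.base_sub hβ) h0
  · have h1 : R.coeff β ζ = 0 := by
      rw [R.coeff_simple_s4 hβ ζ hζ]; simp [Ne.symm heq]
    have h2 : R.coeff (-ζ) ζ = -1 := by
      rw [R.coeff_neg_s4 (R.base_sub hζ) ζ hζ, R.coeff_simple_s4 hζ ζ hζ]; simp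
    rw [h] at h1
    omega

lemma RootSystemBase.adj_inner_neg {β ζ : V} (hβ : β ∈ R.Δ0) (hζ : ζ ∈ R.Δ0)
    (hne : β ≠ ζ) (hadj : ⟪β, ζ⟫ ≠ 0) : ⟪β, ζ⟫ < 0 := by
  rcases lt_or_gt_of_ne hadj with h | h
  · exact h
  · exfalso
    exact R.mixed_not_mem hβ hζ hne
      (R.diff_mem (R.base_sub hβ) (R.base_sub hζ) h hne)

lemma RootSystemBase.adj_sum_mem {β ζ : V} (hβ : β ∈ R.Δ0) (hζ : ζ ∈ R.Δ0)
    (hne : β ≠ ζ) (hadj : ⟪β, ζ⟫ ≠ 0) : β + ζ ∈ R.Δ :=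
  R.sum_mem (R.base_sub hβ) (R.base_sub hζ) (R.adj_inner_neg hβ hζ hne hadj)
    (R.simple_ne_neg hβ hζ)

lemma RootSystemBase.orth_sum_not_mem {β ζ : V} (hβ : β ∈ R.Δ0) (hζ : ζ ∈ R.Δ0)
    (hne : β ≠ ζ) (horth : ⟪β, ζ⟫ = 0) : β + ζ ∉ R.Δ := by
  intro hmem
  have hζζ : 0 < ⟪ζ, ζ⟫ := ipos (R.ne_zero ζ (R.base_sub hζ))
  have h2 : 2 * ⟪β + ζ, ζ⟫ / ⟪ζ, ζ⟫ = (2 : ℝ) := by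
    rw [inner_add_left, horth, zero_add]; field_simp
  have := R.reflect_mem ζ (R.base_sub hζ) (β + ζ) hmem
  rw [h2] at this
  have heq : β + ζ - (2 : ℝ) • ζ = β - ζ := by module
  rw [heq] at this
  exact R.mixed_not_mem hβ hζ hne this


lemma RootSystemBase.pos_simple_exists {μ : V} (hμ : μ ∈ R.Δ)
    (hpos : ∀ α ∈ R.Δ0, 0 ≤ R.coeff μ α) :
    ∃ α ∈ R.Δ0, 0 < R.coeff μ α ∧ 0 < ⟪μ, α⟫ := by
  by_contra hcon
  push_neg at hcon
  have hsum : ⟪μ, μ⟫ = ∑ α ∈ R.Δ0, (R.coeff μ α : ℝ) * ⟪μ, α⟫ := by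
    conv_lhs => rw [show ⟪μ, μ⟫ = ⟪μ, ∑ α ∈ R.Δ0, (R.coeff μ α : ℝ) • α⟫ by
      rw [← R.coeff_spec μ hμ]]
    rw [inner_sum]
    exact Finset.sum_congr rfl fun α _ => real_inner_smul_right μ α _
  have hle : ⟪μ, μ⟫ ≤ 0 := by
    rw [hsum]
    apply Finset.sum_nonpos
    intro α hα
    rcases eq_or_lt_of_le (hpos α hα) with h0 | h0
    · rw [← h0]; simp
    · have hi := hcon α hα h0
      have hc : (0:ℝ) < (R.coeff μ α : ℝ) := by exact_mod_cast h0
      nlinarith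
  nlinarith [ipos (R.ne_zero μ hμ)]

lemma RootSystemBase.claimG (hS : Sg ⊆ R.Δ0) :
    ∀ μ ∈ R.Δ, R.ht Sg μ = 2 →
    ∃ γ ∈ R.Δ, ∃ δ ∈ R.Δ, R.ht Sg γ = 1 ∧ R.ht Sg δ = 1 ∧ γ + δ = μ := by
  suffices h : ∀ n : ℕ, ∀ μ ∈ R.Δ, (R.ht R.Δ0 μ).toNat ≤ n → R.ht Sg μ = 2 →
      ∃ γ ∈ R.Δ, ∃ δ ∈ R.Δ, R.ht Sg γ = 1 ∧ R.ht Sg δ = 1 ∧ γ + δ = μ by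
    intro μ hμ hht
    exact h (R.ht R.Δ0 μ).toNat μ hμ le_rfl hht
  intro n
  induction n with
  | zero =>
    intro μ hμ hn hht
    exfalso
    have hpos := R.pos_of_ht_pos hS hμ (by omega)
    have h1 : R.ht Sg μ ≤ R.ht R.Δ0 μ :=
      Finset.sum_le_sum_of_subset_of_nonneg hS (fun α hα _ => hpos α hα)
    omega
  | succ n ih =>
    intro μ hμ hn hht
    by_cases hcase : ∃ γ ∈ R.Δ, R.ht Sg γ = 1 ∧ 0 < ⟪μ, γ⟫
    · obtain ⟨γ, hγ, hγ1, hγi⟩ := hcase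
      have hne : μ ≠ γ := fun h => by rw [h, hγ1] at hht; omega
      have hd : μ - γ ∈ R.Δ := R.diff_mem hμ hγ hγi hne
      refine ⟨γ, hγ, μ - γ, hd, hγ1, ?_, by abel⟩
      rw [R.ht_sub hS hμ hγ hd]
      omega
    · push_neg at hcase
      have hpos := R.pos_of_ht_pos hS hμ (by omega)
      obtain ⟨α, hα0, hαc, hαi⟩ := R.pos_simple_exists hμ hpos
      have hαΔ : α ∈ R.Δ := R.base_sub hα0
      have hαS : α ∉ Sg := by
        intro hmem
        have h1 : R.ht Sg α = 1 := by rw [R.ht_simple_s4 hS hα0]; simp [hmem]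
        exact absurd hαi (not_lt.mpr (hcase α hαΔ h1))
      have hα1 : R.ht Sg α = 0 := by rw [R.ht_simple_s4 hS hα0]; simp [hαS]
      have hneα : μ ≠ α := fun h => by rw [h, hα1] at hht; omega
      have hμ' : μ - α ∈ R.Δ := R.diff_mem hμ hαΔ hαi hneα
      have hht' : R.ht Sg (μ - α) = 2 := by rw [R.ht_sub hS hμ hαΔ hμ', hα1]; omega
      have htα : R.ht R.Δ0 α = 1 := by
        rw [R.ht_simple_s4 subset_rfl hα0]; simp [hα0]
      have htot : R.ht R.Δ0 (μ - α) = R.ht R.Δ0 μ - 1 := by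
        rw [R.ht_sub subset_rfl hμ hαΔ hμ', htα]
      have hpos' := R.pos_of_ht_pos hS hμ' (by omega)
      have hnn : 0 ≤ R.ht R.Δ0 (μ - α) :=
        Finset.sum_nonneg fun α' hα' => hpos' α' hα'
      have hn' : (R.ht R.Δ0 (μ - α)).toNat ≤ n := by omega
      obtain ⟨γ, hγ, δ, hδ, hγ1, hδ1, hsum⟩ := ih (μ - α) hμ' hn' hht'
      have hiγ : ⟪μ, γ⟫ ≤ 0 := hcase γ hγ hγ1
      have hiδ : ⟪μ, δ⟫ ≤ 0 := hcase δ hδ hδ1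
      have hμμα : ⟪μ, μ⟫ ≤ ⟪μ, α⟫ := by
        have h1 : ⟪μ, μ - α⟫ = ⟪μ, γ⟫ + ⟪μ, δ⟫ := by rw [← hsum, inner_add_right]
        have h2 : ⟪μ, μ - α⟫ = ⟪μ, μ⟫ - ⟪μ, α⟫ := inner_sub_right μ μ α
        linarith
      have hneμα : μ ≠ -α := by
        intro h
        rw [h, R.ht_neg_s4 hS hαΔ, hα1] at hht
        omega
      have hCS := R.strictCS hμ hαΔ hneα hneμα
      have hkey : ⟪α, μ - α⟫ < 0 := by
        have h3 : ⟪α, μ - α⟫ = ⟪μ, α⟫ - ⟪α, α⟫ := by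
          rw [inner_sub_right, real_inner_comm α μ]
        have hmm := ipos (R.ne_zero μ hμ)
        have hss := ipos (R.ne_zero α hαΔ)
        nlinarith [hCS, hμμα, hmm, hss]
      have hone : ⟪α, γ⟫ < 0 ∨ ⟪α, δ⟫ < 0 := by
        have h4 : ⟪α, μ - α⟫ = ⟪α, γ⟫ + ⟪α, δ⟫ := by rw [← hsum, inner_add_right]
        by_contra hcon
        push_neg at hcon
        linarith [hcon.1, hcon.2]
      rcases hone with hneg | hneg
      · have hnαγ : α ≠ -γ := by
          intro h
          rw [h, R.ht_neg_s4 hS hγ, hγ1] at hα1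
          omega
        have hαγ : α + γ ∈ R.Δ := R.sum_mem hαΔ hγ hneg hnαγ
        refine ⟨α + γ, hαγ, δ, hδ, ?_, hδ1, ?_⟩
        · rw [R.ht_add_s4 hS hαΔ hγ hαγ, hα1, hγ1]; ring
        · rw [add_assoc, hsum]; abel
      · have hnαδ : α ≠ -δ := by
          intro h
          rw [h, R.ht_neg_s4 hS hδ, hδ1] at hα1
          omega
        have hαδ : α + δ ∈ R.Δ := R.sum_mem hαΔ hδ hneg hnαδ
        refine ⟨γ, hγ, α + δ, hαδ, hγ1, ?_, ?_⟩
        · rw [R.ht_add_s4 hS hαΔ hδ hαδ, hα1, hδ1]; ring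
        · rw [show γ + (α + δ) = (γ + δ) + α by abel, hsum]; abel

end Comb

section Lie

variable {V : Type*} [NormedAddCommGroup V] [InnerProductSpace ℝ V]
variable {L : Type*} [LieRing L] [LieAlgebra ℂ L]
variable (G : GradedLieData V L)

lemma GradedLieData.rs_le_g_s4 {Sg : Finset V} {μ : V} (hμ : μ ∈ G.base.Δ) {j : ℤ}
    (hj : j ≠ 0) (h : G.base.ht Sg μ = j) : G.rs μ ≤ G.g Sg j := by
  unfold GradedLieData.g
  rw [if_neg hj]
  exact le_iSup₂ (f := fun β (_ : β ∈ G.base.Δ.filter (fun β => G.base.ht Sg β = j)) => G.rs β)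
    μ (Finset.mem_filter.mpr ⟨hμ, h⟩)

lemma GradedLieData.g_eq {Sg : Finset V} {j : ℤ} (hj : j ≠ 0) :
    G.g Sg j = ⨆ β ∈ G.base.Δ.filter (fun β => G.base.ht Sg β = j), G.rs β := by
  unfold GradedLieData.g
  rw [if_neg hj]

lemma GradedLieData.rs_le_big {a b : V} (ha : a ∈ G.base.Δ) (hab : b ≠ a) :
    G.rs b ≤ G.H ⊔ ⨆ γ ∈ G.base.Δ.erase a, G.rs γ := by
  by_cases hb : b ∈ G.base.Δ
  · refine le_sup_of_le_right ?_
    exact le_iSup₂ (f := fun γ (_ : γ ∈ G.base.Δ.erase a) => G.rs γ) b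
      (Finset.mem_erase.mpr ⟨hab, hb⟩)
  · rw [G.rs_bot b hb]; exact bot_le

lemma GradedLieData.eq_zero_of_mem_rs {a : V} (ha : a ∈ G.base.Δ) {u : L}
    (hu : u ∈ G.rs a) (h2 : u ∈ G.H ⊔ ⨆ γ ∈ G.base.Δ.erase a, G.rs γ) : u = 0 :=
  (Submodule.disjoint_def.mp (G.rs_indep a ha)) u hu h2

/-- bracket of a root vector with anything of pure root type lands correctly or vanishes -/
lemma GradedLieData.br_cases {a b : V} (ha : a ∈ G.base.Δ) (hb : b ∈ G.base.Δ)
    (hne : a + b ≠ 0) {u v : L} (hu : u ∈ G.rs a) (hv : v ∈ G.rs b) :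
    ⁅u, v⁆ ∈ G.rs (a + b) ∨ ⁅u, v⁆ = 0 := by
  by_cases hmem : a + b ∈ G.base.Δ
  · exact Or.inl (G.br_rs_mem a ha b hb hmem u hu v hv)
  · exact Or.inr (G.br_rs_zero a ha b hb hmem hne u hu v hv)

lemma GradedLieData.br_g_neg_one {Sg : Finset V} (hS : Sg ⊆ G.base.Δ0) {u v : L}
    (hu : u ∈ G.g Sg (-1)) (hv : v ∈ G.g Sg (-1)) : ⁅u, v⁆ ∈ G.g Sg (-2) := by
  rw [G.g_eq (by norm_num : (-1 : ℤ) ≠ 0)] at hu hv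
  have key : ∀ a ∈ G.base.Δ.filter (fun β => G.base.ht Sg β = -1), ∀ x ∈ G.rs a,
      ∀ b ∈ G.base.Δ.filter (fun β => G.base.ht Sg β = -1), ∀ y ∈ G.rs b,
      ⁅x, y⁆ ∈ G.g Sg (-2) := by
    intro a haf x hx b hbf y hy
    obtain ⟨ha, hta⟩ := Finset.mem_filter.mp haf
    obtain ⟨hb, htb⟩ := Finset.mem_filter.mp hbf
    have hne : a + b ≠ 0 := by
      intro h0
      have hba : b = -a := by rw [eq_neg_iff_add_eq_zero, add_comm]; exact h0
      rw [hba, G.base.ht_neg_s4 hS ha] at htb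
      omega
    by_cases hab : a + b ∈ G.base.Δ
    · have hmem := G.br_rs_mem a ha b hb hab x hx y hy
      have htab : G.base.ht Sg (a + b) = -2 := by
        rw [G.base.ht_add_s4 hS ha hb hab, hta, htb]; norm_num
      exact G.rs_le_g_s4 hab (by norm_num) htab hmem
    · rw [G.br_rs_zero a ha b hb hab hne x hx y hy]
      exact Submodule.zero_mem _
  -- fix u a root vector first, induct on v, then induct on u
  have step1 : ∀ a ∈ G.base.Δ.filter (fun β => G.base.ht Sg β = -1), ∀ x ∈ G.rs a,
      ⁅x, v⁆ ∈ G.g Sg (-2) := by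
    intro a haf x hx
    have hle : (⨆ β ∈ G.base.Δ.filter (fun β => G.base.ht Sg β = -1), G.rs β) ≤
        Submodule.comap ((LieAlgebra.ad ℂ L) x) (G.g Sg (-2)) := by
      refine iSup₂_le fun b hbf => ?_
      intro y hy
      exact key a haf x hx b hbf y hy
    exact hle hv
  have hle : (⨆ β ∈ G.base.Δ.filter (fun β => G.base.ht Sg β = -1), G.rs β) ≤
      Submodule.comap ((LieAlgebra.ad ℂ L : L →ₗ[ℂ] Module.End ℂ L).flip v) (G.g Sg (-2)) := by
    refine iSup₂_le fun a haf => ?_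
    intro x hx
    exact step1 a haf x hx
  exact hle hu

end Lie

/-- For a grading of Monge type of a complex semisimple Lie algebra
with `dim 𝔤₋₁ > 2` and leader `ζ ∈ Σ` (the unique simple root with
`𝔤₋₁ = 𝔤_{-ζ} ⊕ 𝔶`), the set `Σ` consists precisely of `ζ` together with all simple
roots adjacent to `ζ` in the Dynkin diagram. -/
theorem statement4 {V : Type*} [NormedAddCommGroup V] [InnerProductSpace ℝ V]
    {L : Type*} [LieRing L] [LieAlgebra ℂ L] [FiniteDimensional ℂ L]
    (G : GradedLieData V L) (Sg : Finset V) (hSg : Sg ⊆ G.base.Δ0) (hne : Sg.Nonempty)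
    (hdim : 2 < Module.finrank ℂ ↥(G.g Sg (-1)))
    (Y : Submodule ℂ L) (hY1 : Y ≤ G.g Sg (-1)) (hY0 : Y ≠ ⊥)
    (hYab : ∀ a ∈ Y, ∀ b ∈ Y, ⁅a, b⁆ = (0 : L))
    (hYcodim : Module.finrank ℂ ↥Y + 1 = Module.finrank ℂ ↥(G.g Sg (-1)))
    (hYdim : Module.finrank ℂ ↥(G.g Sg (-2)) = Module.finrank ℂ ↥Y)
    (ζ : V) (hζ : ζ ∈ Sg)
    (hleader : G.rs (-ζ) ⊔ Y = G.g Sg (-1) ∧ G.rs (-ζ) ⊓ Y = ⊥) :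
    (↑Sg : Set V) = {ζ} ∪ {β : V | β ∈ G.base.Δ0 ∧ β ≠ ζ ∧ ⟪β, ζ⟫ ≠ 0} := by
  set R := G.base with hRdef
  have hζ0 : ζ ∈ R.Δ0 := hSg hζ
  have hζΔ : ζ ∈ R.Δ := R.base_sub hζ0
  have hζht : R.ht Sg ζ = 1 := by rw [R.ht_simple_s4 hSg hζ0]; simp [hζ]
  have hnegζ : -ζ ∈ R.Δ := R.neg_mem ζ hζΔ
  -- root spaces of height-one roots sit in 𝔤₋₁
  have hrsle : ∀ μ ∈ R.Δ, R.ht Sg μ = 1 → G.rs (-μ) ≤ G.g Sg (-1) := by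
    intro μ hμ h1
    exact G.rs_le_g_s4 (R.neg_mem μ hμ) (by norm_num)
      (by rw [R.ht_neg_s4 hSg hμ, h1])
  -- nonzero vectors in root spaces
  have hrsnz : ∀ a ∈ R.Δ, ∃ z ∈ G.rs a, z ≠ 0 := by
    intro a ha
    have hd := G.rs_dim a ha
    have hb : G.rs a ≠ ⊥ := by
      intro h; rw [h] at hd; simp at hd
    exact (Submodule.ne_bot_iff _).mp hb
  -- spanning property of a nonzero vector in a root space
  have hspan1 : ∀ a ∈ R.Δ, ∀ z ∈ G.rs a, z ≠ 0 → ∀ w ∈ G.rs a, ∃ c : ℂ, w = c • z := by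
    intro a ha z hz hz0 w hw
    have hd := G.rs_dim a ha
    have h1 := (finrank_eq_one_iff_of_nonzero' (⟨z, hz⟩ : ↥(G.rs a))
      (by simpa using hz0)).mp hd ⟨w, hw⟩
    obtain ⟨c, hc⟩ := h1
    refine ⟨c, ?_⟩
    have := congrArg Subtype.val hc
    simpa using this.symm
  -- the leader vector x₀
  obtain ⟨x₀, hx₀m, hx₀0⟩ := hrsnz (-ζ) hnegζ
  have hx₀g : x₀ ∈ G.g Sg (-1) := hrsle ζ hζΔ hζht hx₀m
  -- decomposition of 𝔤₋₁ elements
  have hdecomp : ∀ w ∈ G.g Sg (-1), ∃ c : ℂ, ∃ y ∈ Y, w = c • x₀ + y := by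
    intro w hw
    rw [← hleader.1] at hw
    obtain ⟨u, hu, y, hy, huy⟩ := Submodule.mem_sup.mp hw
    obtain ⟨c, hc⟩ := hspan1 (-ζ) hnegζ x₀ hx₀m hx₀0 u hu
    exact ⟨c, y, hy, by rw [← huy, hc]⟩
  -- surjectivity of ad x₀ : Y → 𝔤₋₂
  have hmaple : Submodule.map ((LieAlgebra.ad ℂ L x₀ : L →ₗ[ℂ] L)) Y ≤ G.g Sg (-2) := by
    rintro w ⟨y, hy, rfl⟩
    exact G.br_g_neg_one hSg hx₀g (hY1 hy)
  have hlemap : G.g Sg (-2) ≤ Submodule.map ((LieAlgebra.ad ℂ L x₀ : L →ₗ[ℂ] L)) Y := by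
    rw [G.g_eq (by norm_num : (-2 : ℤ) ≠ 0)]
    refine iSup₂_le fun a haf => ?_
    obtain ⟨ha, hta⟩ := Finset.mem_filter.mp haf
    have hnega : -a ∈ R.Δ := R.neg_mem a ha
    have htnega : R.ht Sg (-a) = 2 := by rw [R.ht_neg_s4 hSg ha, hta]; norm_num
    obtain ⟨γ, hγ, δ, hδ, hγ1, hδ1, hsum⟩ := R.claimG hSg (-a) hnega htnega
    obtain ⟨u, hu, hu0⟩ := hrsnz (-γ) (R.neg_mem γ hγ)
    obtain ⟨v, hv, hv0⟩ := hrsnz (-δ) (R.neg_mem δ hδ)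
    have hadd : (-γ) + (-δ) = a := by rw [← neg_add, hsum, neg_neg]
    have haΔ' : (-γ) + (-δ) ∈ R.Δ := by rw [hadd]; exact ha
    have hbr : ⁅u, v⁆ ∈ G.rs a := by
      rw [← hadd]
      exact G.br_rs_mem _ (R.neg_mem γ hγ) _ (R.neg_mem δ hδ) haΔ' u hu v hv
    have hbr0 : ⁅u, v⁆ ≠ 0 := by
      intro h
      rcases G.br_nondeg _ (R.neg_mem γ hγ) _ (R.neg_mem δ hδ) haΔ' u hu v hv h with h1 | h1
      · exact hu0 h1
      · exact hv0 h1
    -- ⁅u, v⁆ lies in the image of Y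
    obtain ⟨cu, yu, hyu, hud⟩ := hdecomp u (hrsle γ hγ hγ1 hu)
    obtain ⟨cv, yv, hyv, hvd⟩ := hdecomp v (hrsle δ hδ hδ1 hv)
    have hbrform : ⁅u, v⁆ = ⁅x₀, cu • yv - cv • yu⁆ := by
      rw [hud, hvd]
      have h00 : ⁅yu, yv⁆ = 0 := hYab yu hyu yv hyv
      simp only [add_lie, lie_add, lie_smul, smul_lie, lie_self, smul_zero, lie_sub, h00]
      rw [show ⁅yu, x₀⁆ = -⁅x₀, yu⁆ by rw [← lie_skew]]
      module
    have hbrmem : ⁅u, v⁆ ∈ Submodule.map ((LieAlgebra.ad ℂ L x₀ : L →ₗ[ℂ] L)) Y := by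
      rw [hbrform]
      exact ⟨cu • yv - cv • yu,
        Submodule.sub_mem Y (Submodule.smul_mem Y cu hyv) (Submodule.smul_mem Y cv hyu), rfl⟩
    -- rs a is spanned by ⁅u, v⁆
    intro w hw
    obtain ⟨c, hc⟩ := hspan1 a ha ⁅u, v⁆ hbr hbr0 w hw
    rw [hc]
    exact Submodule.smul_mem _ c hbrmem
  -- injectivity of ad x₀ on Y
  have hinj : ∀ y ∈ Y, ⁅x₀, y⁆ = 0 → y = 0 := by
    have hmapeq : Submodule.map ((LieAlgebra.ad ℂ L x₀ : L →ₗ[ℂ] L)) Y = G.g Sg (-2) :=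
      le_antisymm hmaple hlemap
    set F := ((LieAlgebra.ad ℂ L x₀ : L →ₗ[ℂ] L)).domRestrict Y with hF
    have hrange : LinearMap.range F = Submodule.map ((LieAlgebra.ad ℂ L x₀ : L →ₗ[ℂ] L)) Y :=
      LinearMap.range_domRestrict Y _
    have hrk := LinearMap.finrank_range_add_finrank_ker F
    have hfr : Module.finrank ℂ ↥(LinearMap.range F) = Module.finrank ℂ ↥Y := by
      rw [hrange, hmapeq, hYdim]
    have hker : Module.finrank ℂ ↥(LinearMap.ker F) = 0 := by omega
    have hkerbot : LinearMap.ker F = ⊥ := Submodule.finrank_eq_zero.mp hker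
    intro y hy h0
    have : (⟨y, hy⟩ : ↥Y) ∈ LinearMap.ker F := by
      simp only [LinearMap.mem_ker, hF, LinearMap.domRestrict_apply]
      exact h0
    rw [hkerbot, Submodule.mem_bot] at this
    exact congrArg Subtype.val this
  -- key vanishing: brackets of two non-leader height-one root vectors vanish
  have hE : ∀ γ ∈ R.Δ, ∀ δ ∈ R.Δ, R.ht Sg γ = 1 → R.ht Sg δ = 1 → γ ≠ δ → γ ≠ ζ → δ ≠ ζ →
      ∀ zγ ∈ G.rs (-γ), ∀ zδ ∈ G.rs (-δ), ⁅zγ, zδ⁆ = 0 := by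
    intro γ hγ δ hδ hγ1 hδ1 hγδ hγζ hδζ zγ hzγ zδ hzδ
    have hnγ : -γ ∈ R.Δ := R.neg_mem γ hγ
    have hnδ : -δ ∈ R.Δ := R.neg_mem δ hδ
    obtain ⟨cγ, yγ, hyγ, hdγ⟩ := hdecomp zγ (hrsle γ hγ hγ1 hzγ)
    obtain ⟨cδ, yδ, hyδ, hdδ⟩ := hdecomp zδ (hrsle δ hδ hδ1 hzδ)
    have hyγ' : yγ = zγ - cγ • x₀ := by rw [hdγ]; abel
    have hyδ' : yδ = zδ - cδ • x₀ := by rw [hdδ]; abel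
    have h1 : ⁅zγ - cγ • x₀, zδ - cδ • x₀⁆ = 0 := by
      rw [← hyγ', ← hyδ']; exact hYab yγ hyγ yδ hyδ
    have hexp : ⁅zγ - cγ • x₀, zδ - cδ • x₀⁆ =
        ⁅zγ, zδ⁆ - (cγ • ⁅x₀, zδ⁆ - cδ • ⁅x₀, zγ⁆) := by
      simp only [lie_sub, sub_lie, lie_smul, smul_lie, lie_self, smul_zero, sub_zero]
      rw [show ⁅zγ, x₀⁆ = -⁅x₀, zγ⁆ by rw [← lie_skew]]
      module
    have heq : ⁅zγ, zδ⁆ = cγ • ⁅x₀, zδ⁆ - cδ • ⁅x₀, zγ⁆ := by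
      rw [hexp] at h1
      exact sub_eq_zero.mp h1
    have hsum0 : -γ + -δ ≠ 0 := by
      intro h
      have : δ = -γ := by linear_combination (norm := module) -h
      rw [this, R.ht_neg_s4 hSg hγ, hγ1] at hδ1
      omega
    by_cases hroot : -γ + -δ ∈ R.Δ
    · have hA : ⁅zγ, zδ⁆ ∈ G.rs (-γ + -δ) := G.br_rs_mem _ hnγ _ hnδ hroot _ hzγ _ hzδ
      have hBig : ⁅zγ, zδ⁆ ∈ G.H ⊔ ⨆ c ∈ R.Δ.erase (-γ + -δ), G.rs c := by
        rw [heq]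
        have hB : cδ • ⁅x₀, zγ⁆ ∈ G.H ⊔ ⨆ c ∈ R.Δ.erase (-γ + -δ), G.rs c := by
          have hne1 : -ζ + -γ ≠ 0 := by
            intro h
            have : γ = -ζ := by linear_combination (norm := module) -h
            rw [this, R.ht_neg_s4 hSg hζΔ, hζht] at hγ1
            omega
          rcases G.br_cases hnegζ hnγ hne1 hx₀m hzγ with h | h
          · refine Submodule.smul_mem _ _ (G.rs_le_big hroot ?_ h)
            intro hcontra
            apply hδζ
            have : -ζ + -γ = -γ + -δ := hcontra
            have h2 : (δ : V) = ζ := by linear_combination (norm := module) this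
            exact h2
          · rw [h, smul_zero]; exact Submodule.zero_mem _
        have hC : cγ • ⁅x₀, zδ⁆ ∈ G.H ⊔ ⨆ c ∈ R.Δ.erase (-γ + -δ), G.rs c := by
          have hne1 : -ζ + -δ ≠ 0 := by
            intro h
            have : δ = -ζ := by linear_combination (norm := module) -h
            rw [this, R.ht_neg_s4 hSg hζΔ, hζht] at hδ1
            omega
          rcases G.br_cases hnegζ hnδ hne1 hx₀m hzδ with h | h
          · refine Submodule.smul_mem _ _ (G.rs_le_big hroot ?_ h)
            intro hcontra
            apply hγζ
            have : -ζ + -δ = -γ + -δ := hcontra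
            have h2 : (γ : V) = ζ := by linear_combination (norm := module) this
            exact h2
          · rw [h, smul_zero]; exact Submodule.zero_mem _
        exact Submodule.sub_mem _ hC hB
      exact G.eq_zero_of_mem_rs hroot hA hBig
    · exact G.br_rs_zero _ hnγ _ hnδ hroot hsum0 _ hzγ _ hzδ
  -- corollary: the sum of two distinct non-leader height-one roots is not a root
  have hEroot : ∀ γ ∈ R.Δ, ∀ δ ∈ R.Δ, R.ht Sg γ = 1 → R.ht Sg δ = 1 → γ ≠ δ → γ ≠ ζ →
      δ ≠ ζ → γ + δ ∉ R.Δ := by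
    intro γ hγ δ hδ hγ1 hδ1 hγδ hγζ hδζ hmem
    obtain ⟨zγ, hzγ, hzγ0⟩ := hrsnz (-γ) (R.neg_mem γ hγ)
    obtain ⟨zδ, hzδ, hzδ0⟩ := hrsnz (-δ) (R.neg_mem δ hδ)
    have h0 := hE γ hγ δ hδ hγ1 hδ1 hγδ hγζ hδζ zγ hzγ zδ hzδ
    have hroot : -γ + -δ ∈ R.Δ := by
      have := R.neg_mem _ hmem
      rwa [neg_add] at this
    rcases G.br_nondeg _ (R.neg_mem γ hγ) _ (R.neg_mem δ hδ) hroot zγ hzγ zδ hzδ h0 with h | h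
    · exact hzγ0 h
    · exact hzδ0 h
  -- non-vanishing of ad x₀ on non-leader height-one root vectors; forced roots ζ + μ
  have hnv : ∀ μ ∈ R.Δ, R.ht Sg μ = 1 → μ ≠ ζ → ζ + μ ∈ R.Δ := by
    intro μ hμ hμ1 hμζ
    obtain ⟨z, hz, hz0⟩ := hrsnz (-μ) (R.neg_mem μ hμ)
    obtain ⟨c, y, hy, hd⟩ := hdecomp z (hrsle μ hμ hμ1 hz)
    have hy0 : y ≠ 0 := by
      intro h
      rw [h, add_zero] at hd
      have hzz : z ∈ G.rs (-ζ) := hd ▸ Submodule.smul_mem _ c hx₀m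
      have : z = 0 := G.eq_zero_of_mem_rs (R.neg_mem μ hμ) hz
        (G.rs_le_big (R.neg_mem μ hμ) (by
          intro hc
          exact hμζ (by
            have : (μ : V) = ζ := by
              have h2 : -ζ = -μ := hc
              linear_combination (norm := module) h2
            exact this)) hzz)
      exact hz0 this
    have hbr : ⁅x₀, z⁆ = ⁅x₀, y⁆ := by
      rw [hd]
      simp only [lie_add, lie_smul, lie_self, smul_zero, zero_add]
    have hbrnz : ⁅x₀, z⁆ ≠ 0 := by
      rw [hbr]
      intro h
      exact hy0 (hinj y hy h)
    have hne1 : -ζ + -μ ≠ 0 := by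
      intro h
      have : μ = -ζ := by linear_combination (norm := module) -h
      rw [this, R.ht_neg_s4 hSg hζΔ, hζht] at hμ1
      omega
    by_cases hroot : -ζ + -μ ∈ R.Δ
    · have := R.neg_mem _ hroot
      rwa [neg_add, neg_neg, neg_neg] at this
    · exact absurd (G.br_rs_zero _ hnegζ _ (R.neg_mem μ hμ) hroot hne1 _ hx₀m _ hz) hbrnz
  -- direction ⊆ : elements of Σ other than ζ are adjacent to ζ
  have hsub : ∀ β ∈ Sg, β ≠ ζ → ⟪β, ζ⟫ ≠ 0 := by
    intro β hβ hβζ h0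
    have hβ0 : β ∈ R.Δ0 := hSg hβ
    have hβΔ : β ∈ R.Δ := R.base_sub hβ0
    have hβ1 : R.ht Sg β = 1 := by rw [R.ht_simple_s4 hSg hβ0]; simp [hβ]
    have := hnv β hβΔ hβ1 hβζ
    rw [add_comm] at this
    exact R.orth_sum_not_mem hβ0 hζ0 hβζ h0 this
  -- direction ⊇ : all simple roots adjacent to ζ lie in Σ
  have hsup : ∀ β ∈ R.Δ0, β ≠ ζ → ⟪β, ζ⟫ ≠ 0 → β ∈ Sg := by
    intro β hβ0 hβζ hadj
    by_contra hβS
    have hβΔ : β ∈ R.Δ := R.base_sub hβ0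
    have hβht : R.ht Sg β = 0 := by rw [R.ht_simple_s4 hSg hβ0]; simp [hβS]
    have hβζneg : ⟪β, ζ⟫ < 0 := R.adj_inner_neg hβ0 hζ0 hβζ hadj
    have hγΔ : ζ + β ∈ R.Δ := by
      rw [add_comm]; exact R.adj_sum_mem hβ0 hζ0 hβζ hadj
    set γ := ζ + β with hγdef
    have hγht : R.ht Sg γ = 1 := by
      rw [hγdef, R.ht_add_s4 hSg hζΔ hβΔ hγΔ, hζht, hβht]; ring
    have hγζ : γ ≠ ζ := by
      intro h
      have : (β : V) = 0 := by
        have h2 : ζ + β = ζ := h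
        linear_combination (norm := module) h2
      exact R.ne_zero β hβΔ this
    -- a third height-one root δ exists
    have hthird : ∃ δ ∈ R.Δ, R.ht Sg δ = 1 ∧ δ ≠ ζ ∧ δ ≠ γ := by
      by_contra hcon
      push_neg at hcon
      have hle2 : G.g Sg (-1) ≤ G.rs (-ζ) ⊔ G.rs (-γ) := by
        rw [G.g_eq (by norm_num : (-1 : ℤ) ≠ 0)]
        refine iSup₂_le fun a haf => ?_
        obtain ⟨ha, hta⟩ := Finset.mem_filter.mp haf
        have hnega : -a ∈ R.Δ := R.neg_mem a ha
        have htnega : R.ht Sg (-a) = 1 := by rw [R.ht_neg_s4 hSg ha, hta]; norm_num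
        rcases eq_or_ne (-a) ζ with h | h
        · have : a = -ζ := by linear_combination (norm := module) -h
          rw [this]; exact le_sup_left
        · rcases eq_or_ne (-a) γ with h2 | h2
          · have : a = -γ := by linear_combination (norm := module) -h2
            rw [this]; exact le_sup_right
          · exact absurd (hcon (-a) hnega htnega) (by simp [h, h2])
      have hfs : Module.finrank ℂ ↥(G.rs (-ζ) ⊔ G.rs (-γ)) ≤ 2 := by
        have heq := Submodule.finrank_sup_add_finrank_inf_eq (G.rs (-ζ)) (G.rs (-γ))
        have h1 := G.rs_dim _ hnegζ
        have h2 := G.rs_dim _ (R.neg_mem γ hγΔ)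
        omega
      have := Submodule.finrank_mono hle2
      omega
    obtain ⟨δ, hδΔ, hδht, hδζ, hδγ⟩ := hthird
    have hζδ : ζ + δ ∈ R.Δ := hnv δ hδΔ hδht hδζ
    rcases le_or_gt ⟪β, δ⟫ 0 with hbd | hbd
    · -- β + (ζ + δ) = γ + δ is a root, contradiction
      have hi : ⟪β, ζ + δ⟫ < 0 := by
        rw [inner_add_right]
        linarith
      have hne : β ≠ -(ζ + δ) := by
        intro h
        have hh : R.ht Sg β = R.ht Sg (-(ζ + δ)) := by rw [h]
        rw [hβht, R.ht_neg_s4 hSg hζδ, R.ht_add_s4 hSg hζΔ hδΔ hζδ, hζht, hδht] at hh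
        omega
      have hmem : β + (ζ + δ) ∈ R.Δ := R.sum_mem hβΔ hζδ hi hne
      have hmem' : γ + δ ∈ R.Δ := by
        rw [show γ + δ = β + (ζ + δ) by rw [hγdef]; abel]
        exact hmem
      exact hEroot γ hγΔ δ hδΔ hγht hδht (Ne.symm hδγ) hγζ hδζ hmem'
    · -- δ - β is a height-one root and (δ - β) + γ = ζ + δ is a root, contradiction
      have hneδβ : δ ≠ β := by
        intro h
        rw [h, hβht] at hδht
        omega
      have hd : δ - β ∈ R.Δ := R.diff_mem hδΔ hβΔ (by rwa [real_inner_comm]) hneδβ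
      have hdht : R.ht Sg (δ - β) = 1 := by
        rw [R.ht_sub hSg hδΔ hβΔ hd, hδht, hβht]; ring
      have hdζ : δ - β ≠ ζ := by
        intro h
        apply hδγ
        have : δ = ζ + β := by linear_combination (norm := module) h
        rw [hγdef, ← this]
      have hdγ : δ - β ≠ γ := by
        intro h
        -- then ζ + δ = 2 γ, contradicting reducedness
        have h2 : ζ + δ = (2 : ℝ) • γ := by
          rw [hγdef]
          have : δ = ζ + β + β := by linear_combination (norm := module) h
          rw [this]
          module
        rw [h2] at hζδ
        exact R.reduced γ hγΔ hζδ
      have hmem' : (δ - β) + γ ∈ R.Δ := by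
        rw [show (δ - β) + γ = ζ + δ by rw [hγdef]; abel]
        exact hζδ
      exact hEroot (δ - β) hd γ hγΔ hdht hγht hdγ hdζ hγζ hmem'
  -- conclude the set equality
  ext x
  simp only [Finset.coe_sort_coe, Set.mem_union, Set.mem_singleton_iff, Set.mem_setOf_eq,
    Finset.mem_coe]
  constructor
  · intro hx
    rcases eq_or_ne x ζ with h | h
    · exact Or.inl h
    · exact Or.inr ⟨hSg hx, h, hsub x hx h⟩
  · rintro (rfl | ⟨hx0, hxζ, hxadj⟩)
    · exact hζ
    · exact hsup x hx0 hxζ hxadj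
end
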